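/- arXiv:0809.5130 — 7 statements merged into one kernel-verified Lean document; each statement's English description precedes it below -/
import Mathlib

section
/- Let B be a unital C*-algebra with increasing projections {p_n}, let J be the associated closed ideal (norm closure of {x : ∃n, p_n x = x p_n = x}) and A its idealizer. Define D_0 = {a ∈ B : ∀n ∃m ≥ n, p_m a p_n = a p_n} and D = {a ∈ B : ∀n, a p_n ∈ J}. Then D_0 ⊆ D and A = D ∩ D*. -/
/-- With `B`, `p n`, `J` and the idealizer `A` as before, define
`D₀ = {a | ∀ n, ∃ m ≥ n, p m * a * p n = a * p n}` and `D = {a | ∀ n, a * p n ∈ J}`.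
Then `D₀ ⊆ D` and `A = D ∩ D*`, where `D* = {a | star a ∈ D}` is the set of adjoints of
elements of `D`. -/
theorem stmt5 {B : Type*} [CStarAlgebra B]
    (p : ℕ → B)
    (hproj : ∀ n, IsSelfAdjoint (p n) ∧ IsIdempotentElem (p n))
    (hmono : ∀ m n, m ≤ n → p m * p n = p m ∧ p n * p m = p m)
    (hne : ∀ n, p n ≠ 1)
    (J : Set B) (hJ : J = closure {x : B | ∃ n, p n * x = x ∧ x * p n = x})
    (A : Set B) (hA : A = {a : B | (∀ x ∈ J, a * x ∈ J) ∧ ∀ x ∈ J, x * a ∈ J})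
    (D₀ : Set B) (hD₀ : D₀ = {a : B | ∀ n, ∃ m ≥ n, p m * (a * p n) = a * p n})
    (D : Set B) (hD : D = {a : B | ∀ n, a * p n ∈ J}) :
    D₀ ⊆ D ∧ A = D ∩ {a : B | star a ∈ D} := by
  have hsa : ∀ n, star (p n) = p n := fun n => (hproj n).1
  have hidem : ∀ n, p n * p n = p n := fun n => (hproj n).2
  set J₀ : Set B := {x : B | ∃ n, p n * x = x ∧ x * p n = x} with hJ₀
  have hJcl : IsClosed J := hJ ▸ isClosed_closure
  have hsub : J₀ ⊆ J := hJ ▸ subset_closure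
  have hmulJ₀ : ∀ x ∈ J₀, ∀ y ∈ J₀, x * y ∈ J₀ := by
    rintro x ⟨n, hn1, hn2⟩ y ⟨m, hm1, hm2⟩
    have hx : p (max n m) * x = x := by
      calc p (max n m) * x = p (max n m) * (p n * x) := by rw [hn1]
        _ = (p (max n m) * p n) * x := by rw [mul_assoc]
        _ = p n * x := by rw [(hmono n (max n m) (le_max_left n m)).2]
        _ = x := hn1
    have hy : y * p (max n m) = y := by
      calc y * p (max n m) = (y * p m) * p (max n m) := by rw [hm2]
        _ = y * (p m * p (max n m)) := by rw [mul_assoc]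
        _ = y * p m := by rw [(hmono m (max n m) (le_max_right n m)).1]
        _ = y := hm2
    exact ⟨max n m, by rw [← mul_assoc, hx], by rw [mul_assoc, hy]⟩
  have hJl : ∀ a ∈ J, ∀ x ∈ J₀, a * x ∈ J := by
    intro a ha x hx
    rw [hJ] at ha ⊢
    exact map_mem_closure (f := fun y => y * x) (continuous_mul_right x) ha (fun y hy => hmulJ₀ y hy x hx)
  have hJr : ∀ a ∈ J, ∀ x ∈ J₀, x * a ∈ J := by
    intro a ha x hx
    rw [hJ] at ha ⊢
    exact map_mem_closure (f := fun y => x * y) (continuous_mul_left x) ha (fun y hy => hmulJ₀ x hx y hy)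
  have hJstar : ∀ x ∈ J, star x ∈ J := by
    intro x hx
    rw [hJ] at hx ⊢
    refine map_mem_closure continuous_star hx ?_
    rintro y ⟨n, h1, h2⟩
    refine ⟨n, ?_, ?_⟩
    · rw [← hsa n, ← star_mul, h2]
    · rw [← hsa n, ← star_mul, h1]
  have hext : ∀ (f : B → B), Continuous f → (∀ x ∈ J₀, f x ∈ J) → ∀ x ∈ J, f x ∈ J := by
    intro f hf hmaps x hx
    rw [hJ] at hx
    have := map_mem_closure hf hx hmaps
    rwa [hJcl.closure_eq] at this
  have hpJ : ∀ n, p n ∈ J := fun n => hsub ⟨n, hidem n, hidem n⟩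
  constructor
  · intro a ha
    rw [hD₀] at ha; rw [hD]
    intro n
    obtain ⟨m, hm, hpm⟩ := ha n
    refine hsub ⟨m, hpm, ?_⟩
    rw [mul_assoc, (hmono n m hm).1]
  · ext a
    rw [hA, hD, Set.mem_inter_iff]
    constructor
    · rintro ⟨h1, h2⟩
      refine ⟨fun n => h1 _ (hpJ n), fun n => ?_⟩
      have := hJstar _ (h2 _ (hpJ n))
      rwa [star_mul, hsa n] at this
    · rintro ⟨hd, hd'⟩
      constructor
      · intro x hx
        refine hext (fun y => a * y) (continuous_mul_left a) ?_ x hx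
        rintro y ⟨n, hn1, hn2⟩
        show a * y ∈ J
        have : a * y = (a * p n) * y := by rw [mul_assoc, hn1]
        rw [this]
        exact hJl _ (hd n) y ⟨n, hn1, hn2⟩
      · intro x hx
        refine hext (fun y => y * a) (continuous_mul_right a) ?_ x hx
        rintro y ⟨n, hn1, hn2⟩
        have hpa : p n * a ∈ J := by
          have := hJstar _ (hd' n)
          rwa [star_mul, hsa n, star_star] at this
        show y * a ∈ J
        have : y * a = y * (p n * a) := by rw [← mul_assoc, hn2]
        rw [this]
        exact hJr _ hpa y ⟨n, hn1, hn2⟩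
end

section
/- Let x ∈ A ⊆ L(H) with J the closed ideal associated to increasing projections p_n ↑ I (strongly). If λ ∈ σ(x) \ σ(π_J(x)), then there exists a sequence {φ_r} of unit vectors, some n ≥ 1 and c > 0 with ‖p_n φ_r‖ ≥ c for all r, such that either ‖x φ_r − λ φ_r‖ → 0 or ‖x* φ_r − λ̄ φ_r‖ → 0. -/
open Filter Topology

/-- A bounded-below operator with bounded-below adjoint is a unit. -/
lemma aux_isUnit {H : Type*} [NormedAddCommGroup H] [InnerProductSpace ℂ H] [CompleteSpace H]
    (T : H →L[ℂ] H) (c d : ℝ) (hc : 0 < c) (hd : 0 < d)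
    (h1 : ∀ φ : H, c * ‖φ‖ ≤ ‖T φ‖)
    (h2 : ∀ φ : H, d * ‖φ‖ ≤ ‖ContinuousLinearMap.adjoint T φ‖) : IsUnit T := by
  have hbound : ∀ φ : H, ‖φ‖ ≤ (⟨c⁻¹, by positivity⟩ : NNReal) * ‖T φ‖ := by
    intro φ
    have := h1 φ
    have : (((⟨c⁻¹, by positivity⟩ : NNReal)) : ℝ) = c⁻¹ := rfl
    rw [this, ← div_eq_inv_mul, le_div_iff₀ hc, mul_comm]
    exact h1 φ
  have hanti : AntilipschitzWith _ T := AddMonoidHomClass.antilipschitz_of_bound T hbound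
  have hinj : T.ker = ⊥ := by
    exact LinearMap.ker_eq_bot.2 hanti.injective
  have hclosed : IsClosed (Set.range ⇑T) := hanti.isClosed_range T.uniformContinuous
  have hclosedS : IsClosed (T.range : Set H) := by
    have : (T.range : Set H) = Set.range ⇑T := by
      ext ψ; simp [LinearMap.mem_range]
    rw [this]; exact hclosed
  have : CompleteSpace (T.range) := hclosedS.completeSpace_coe
  have hsurj : T.range = ⊤ := by
    rw [← Submodule.orthogonal_eq_bot_iff]
    rw [Submodule.eq_bot_iff]
    intro ψ hψ
    have hT : ContinuousLinearMap.adjoint T ψ = 0 := by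
      apply ext_inner_right ℂ
      intro z
      rw [ContinuousLinearMap.adjoint_inner_left]
      simp only [inner_zero_left]
      have : T z ∈ T.range := LinearMap.mem_range_self _ z
      exact ((Submodule.mem_orthogonal' _ _).1 hψ) _ this
    have := h2 ψ
    rw [hT, norm_zero] at this
    have : ‖ψ‖ ≤ 0 := by nlinarith
    simpa [norm_le_zero_iff] using this
  let e := ContinuousLinearEquiv.ofBijective T hinj hsurj
  have he : ⇑e = ⇑T := ContinuousLinearEquiv.coeFn_ofBijective T hinj hsurj
  refine ⟨⟨T, (e.symm : H →L[ℂ] H), ?_, ?_⟩, rfl⟩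
  · ext ψ
    simp only [ContinuousLinearMap.mul_apply, ContinuousLinearMap.one_apply,
      ContinuousLinearMap.coe_coe]
    rw [← he]
    exact e.apply_symm_apply ψ
  · ext ψ
    simp only [ContinuousLinearMap.mul_apply, ContinuousLinearMap.one_apply,
      ContinuousLinearMap.coe_coe]
    rw [← he]
    exact e.symm_apply_apply ψ

/-- Normalization: a lower bound on unit vectors gives a global lower bound. -/
lemma aux_bound {H : Type*} [NormedAddCommGroup H] [InnerProductSpace ℂ H]
    (T : H →L[ℂ] H) (ε : ℝ) (h : ∀ φ : H, ‖φ‖ = 1 → ε ≤ ‖T φ‖) :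
    ∀ φ : H, ε * ‖φ‖ ≤ ‖T φ‖ := by
  intro φ
  rcases eq_or_ne φ 0 with rfl | hφ
  · simp
  have hn : (0:ℝ) < ‖φ‖ := norm_pos_iff.2 hφ
  have h1 : ‖((‖φ‖:ℂ)⁻¹ • φ)‖ = 1 := by
    rw [norm_smul, norm_inv, Complex.norm_real, Real.norm_eq_abs, abs_of_pos hn]
    field_simp
  have := h _ h1
  rw [map_smul, norm_smul, norm_inv, Complex.norm_real, Real.norm_eq_abs, abs_of_pos hn] at this
  rw [mul_comm]
  calc ‖φ‖ * ε ≤ ‖φ‖ * (‖φ‖⁻¹ * ‖T φ‖) := by nlinarith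
    _ = ‖T φ‖ := by field_simp


/-- The key localization lemma: if `z * S = 1 + w` with `w ∈ J` and `S` admits almost-null
unit vectors, then there is a localized sequence of unit vectors along which `‖S φ_r‖ → 0`. -/
lemma aux_localized {H : Type*} [NormedAddCommGroup H] [InnerProductSpace ℂ H] [CompleteSpace H]
    (p : ℕ → H →L[ℂ] H)
    (J : Set (H →L[ℂ] H))
    (hJ : J = closure {y : H →L[ℂ] H | ∃ n, p n * y = y ∧ y * p n = y})
    (S z w : H →L[ℂ] H) (hw : w ∈ J) (hzS : z * S = 1 + w)
    (hs : ∀ ε > (0:ℝ), ∃ φ : H, ‖φ‖ = 1 ∧ ‖S φ‖ < ε) :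
    ∃ (φ : ℕ → H) (n : ℕ) (c : ℝ), 0 < c ∧ (∀ r, ‖φ r‖ = 1) ∧ (∀ r, c ≤ ‖p n (φ r)‖) ∧
      Tendsto (fun r => ‖S (φ r)‖) atTop (𝓝 0) := by
  -- choose approximate null vectors
  have hch : ∀ r : ℕ, ∃ φ : H, ‖φ‖ = 1 ∧ ‖S φ‖ < 1 / (r + 1) := fun r => hs _ (by positivity)
  choose φ₀ hφ₀ hSφ₀ using hch
  -- approximate w by a generator u'
  rw [hJ, Metric.mem_closure_iff] at hw
  obtain ⟨u', hu'mem, hu'dist⟩ := hw (1/4) (by norm_num)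
  obtain ⟨n, -, hn2⟩ := hu'mem
  rw [dist_eq_norm] at hu'dist
  set M : ℝ := max ‖u'‖ 1 with hM
  have hM1 : (1:ℝ) ≤ M := le_max_right _ _
  have hMpos : (0:ℝ) < M := by linarith
  set c : ℝ := (1/2) / M with hc
  have hcpos : 0 < c := by positivity
  -- shift index
  set N : ℕ := ⌈4 * ‖z‖⌉₊ with hN
  have hzN : 4 * ‖z‖ ≤ (N : ℝ) + 1 := le_trans (Nat.le_ceil _) (by linarith)
  refine ⟨fun r => φ₀ (r + N), n, c, hcpos, fun r => hφ₀ _, ?_, ?_⟩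
  · intro r
    set ψ := φ₀ (r + N) with hψ
    have hψ1 : ‖ψ‖ = 1 := hφ₀ _
    have hSψ : ‖S ψ‖ < 1 / ((r + N : ℕ) + 1) := hSφ₀ _
    have hle : (1:ℝ) / ((r + N : ℕ) + 1) ≤ 1 / ((N:ℝ) + 1) := by
      apply one_div_le_one_div_of_le (by positivity)
      push_cast; linarith [Nat.cast_nonneg (α := ℝ) r]
    have hz4 : ‖z‖ * ‖S ψ‖ ≤ 1/4 := by
      rcases le_or_gt ‖z‖ 0 with h | h
      · have := norm_nonneg (S ψ)
        nlinarith
      · have h1 : ‖S ψ‖ ≤ 1 / ((N:ℝ) + 1) := le_trans hSψ.le (by exact_mod_cast hle)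
        have h2 : ‖z‖ * ‖S ψ‖ ≤ ‖z‖ * (1 / ((N:ℝ) + 1)) := by
          apply mul_le_mul_of_nonneg_left h1 (norm_nonneg z)
        have h3 : ‖z‖ * (1 / ((N:ℝ) + 1)) ≤ 1/4 := by
          rw [mul_one_div, div_le_div_iff₀ (by positivity) (by norm_num)]
          linarith
        linarith
    -- (1 + w) ψ = z (S ψ)
    have happ : ψ + w ψ = z (S ψ) := by
      have := congrArg (fun T : H →L[ℂ] H => T ψ) hzS
      simpa [ContinuousLinearMap.mul_apply, ContinuousLinearMap.add_apply] using this.symm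
    have h14 : ‖ψ + w ψ‖ ≤ 1/4 := by
      rw [happ]
      calc ‖z (S ψ)‖ ≤ ‖z‖ * ‖S ψ‖ := z.le_opNorm _
        _ ≤ 1/4 := hz4
    have hwψ : (3:ℝ)/4 ≤ ‖w ψ‖ := by
      have h := norm_add_le (ψ + w ψ) (-(w ψ))
      rw [add_neg_cancel_right, norm_neg] at h
      linarith
    have hdiff : ‖w ψ - u' ψ‖ ≤ 1/4 := by
      calc ‖w ψ - u' ψ‖ = ‖(w - u') ψ‖ := by simp [ContinuousLinearMap.sub_apply]
        _ ≤ ‖w - u'‖ * ‖ψ‖ := (w - u').le_opNorm _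
        _ ≤ 1/4 := by rw [hψ1, mul_one]; linarith
    have hu'ψ : (1:ℝ)/2 ≤ ‖u' ψ‖ := by
      have h := norm_add_le (w ψ - u' ψ) (u' ψ)
      rw [sub_add_cancel] at h
      linarith
    have hfac : u' ψ = u' (p n ψ) := by
      have := congrArg (fun T : H →L[ℂ] H => T ψ) hn2
      simpa [ContinuousLinearMap.mul_apply] using this.symm
    have : ‖u' ψ‖ ≤ M * ‖p n ψ‖ := by
      rw [hfac]
      calc ‖u' (p n ψ)‖ ≤ ‖u'‖ * ‖p n ψ‖ := u'.le_opNorm _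
        _ ≤ M * ‖p n ψ‖ := by
          apply mul_le_mul_of_nonneg_right (le_max_left _ _) (norm_nonneg _)
    rw [hc, div_le_iff₀ hMpos]
    nlinarith
  · apply squeeze_zero (fun r => norm_nonneg _) (fun r => (hSφ₀ (r + N)).le)
    have h := (tendsto_one_div_add_atTop_nhds_zero_nat (𝕜 := ℝ)).comp (tendsto_add_atTop_nat N)
    have : (fun r : ℕ => 1 / ((r + N : ℕ) + 1 : ℝ)) =
        (fun n : ℕ => 1 / ((n : ℝ) + 1)) ∘ (fun a => a + N) := by
      funext r; simp [Function.comp]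
    rw [this]
    exact h


/-- `J` is closed under adjoints. -/
lemma aux_star_mem {H : Type*} [NormedAddCommGroup H] [InnerProductSpace ℂ H] [CompleteSpace H]
    (p : ℕ → H →L[ℂ] H) (hproj : ∀ n, IsSelfAdjoint (p n) ∧ IsIdempotentElem (p n))
    (J : Set (H →L[ℂ] H))
    (hJ : J = closure {y : H →L[ℂ] H | ∃ n, p n * y = y ∧ y * p n = y})
    {w : H →L[ℂ] H} (hw : w ∈ J) : star w ∈ J := by
  subst hJ
  refine map_mem_closure continuous_star hw ?_
  rintro y ⟨n, h1, h2⟩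
  refine ⟨n, ?_, ?_⟩
  · have := congrArg star h2
    rwa [star_mul, (hproj n).1.star_eq] at this
  · have := congrArg star h1
    rwa [star_mul, (hproj n).1.star_eq] at this

/-- With `H`, `p n`, `J`, and the idealizer `A` as before, suppose `x ∈ A` and
`λ ∈ σ(x) \ σ(π_J(x))`, i.e. `λ` is in the spectrum of `x` but `λ1 - x` is invertible
modulo `J` (with inverse in `A`).  Then there is a sequence of unit vectors `φ r` that is
localized (`‖p n (φ r)‖ ≥ c > 0` for some `n` and all `r`) and satisfies either
`‖x φ_r - λ φ_r‖ → 0` or `‖x* φ_r - λ̄ φ_r‖ → 0`. -/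
theorem stmt7 {H : Type*} [NormedAddCommGroup H] [InnerProductSpace ℂ H] [CompleteSpace H]
    (p : ℕ → H →L[ℂ] H)
    (hproj : ∀ n, IsSelfAdjoint (p n) ∧ IsIdempotentElem (p n))
    (hmono : ∀ m n, m ≤ n → p m * p n = p m ∧ p n * p m = p m)
    (hstrong : ∀ v : H, Tendsto (fun n => p n v) atTop (𝓝 v))
    (J : Set (H →L[ℂ] H))
    (hJ : J = closure {y : H →L[ℂ] H | ∃ n, p n * y = y ∧ y * p n = y})
    (A : Set (H →L[ℂ] H))
    (hA : A = {a : H →L[ℂ] H | (∀ y ∈ J, a * y ∈ J) ∧ ∀ y ∈ J, y * a ∈ J})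
    (x : H →L[ℂ] H) (hx : x ∈ A) (lam : ℂ)
    (hlam : lam ∈ spectrum ℂ x)
    -- `lam ∉ σ(π_J(x))` : `lam • 1 - x` is invertible modulo `J`
    (hquot : ∃ y ∈ A, ∃ u ∈ J, ∃ v ∈ J,
      y * (lam • (1 : H →L[ℂ] H) - x) = 1 + u ∧ (lam • (1 : H →L[ℂ] H) - x) * y = 1 + v) :
    ∃ (φ : ℕ → H) (n : ℕ) (c : ℝ), 0 < c ∧ (∀ r, ‖φ r‖ = 1) ∧ (∀ r, c ≤ ‖p n (φ r)‖) ∧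
      (Tendsto (fun r => ‖x (φ r) - lam • φ r‖) atTop (𝓝 0) ∨
        Tendsto (fun r => ‖ContinuousLinearMap.adjoint x (φ r) - (starRingEnd ℂ) lam • φ r‖)
          atTop (𝓝 0)) := by
  obtain ⟨y, -, u, hu, v, hv, hyu, hyv⟩ := hquot
  set T : H →L[ℂ] H := lam • (1 : H →L[ℂ] H) - x with hT
  have hnotunit : ¬ IsUnit T := by
    have h := spectrum.mem_iff.1 hlam
    rwa [Algebra.algebraMap_eq_smul_one] at h
  have hTapp : ∀ ψ : H, T ψ = lam • ψ - x ψ := by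
    intro ψ
    simp [hT, ContinuousLinearMap.sub_apply, ContinuousLinearMap.smul_apply]
  by_cases h1 : ∀ ε > (0:ℝ), ∃ φ : H, ‖φ‖ = 1 ∧ ‖T φ‖ < ε
  · obtain ⟨φ, n, c, hc, hunit, hloc, htend⟩ := aux_localized p J hJ T y u hu hyu h1
    refine ⟨φ, n, c, hc, hunit, hloc, Or.inl ?_⟩
    convert htend using 2 with r
    rw [hTapp, norm_sub_rev]
  · by_cases h2 : ∀ ε > (0:ℝ), ∃ φ : H, ‖φ‖ = 1 ∧ ‖(star T) φ‖ < ε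
    · have hstarcalc : star y * star T = 1 + star v := by
        have := congrArg star hyv
        rwa [star_mul, star_add, star_one] at this
      obtain ⟨φ, n, c, hc, hunit, hloc, htend⟩ :=
        aux_localized p J hJ (star T) (star y) (star v)
          (aux_star_mem p hproj J hJ hv) hstarcalc h2
      refine ⟨φ, n, c, hc, hunit, hloc, Or.inr ?_⟩
      convert htend using 2 with r
      have hTstar : star T = (starRingEnd ℂ) lam • (1 : H →L[ℂ] H) - star x := by
        rw [hT, star_sub, star_smul, star_one]
        rfl
      rw [ContinuousLinearMap.star_eq_adjoint] at hTstar ⊢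
      rw [hTstar]
      simp only [ContinuousLinearMap.sub_apply, ContinuousLinearMap.smul_apply,
        ContinuousLinearMap.one_apply]
      rw [norm_sub_rev, ContinuousLinearMap.star_eq_adjoint]
    · exfalso
      push_neg at h1 h2
      obtain ⟨ε₁, hε₁, hb1⟩ := h1
      obtain ⟨ε₂, hε₂, hb2⟩ := h2
      apply hnotunit
      apply aux_isUnit T ε₁ ε₂ hε₁ hε₂
      · exact aux_bound T ε₁ hb1
      · intro φ
        rw [← ContinuousLinearMap.star_eq_adjoint]
        exact aux_bound (star T) ε₂ hb2 φ
end

section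
/- Let J_1 and J_2 be closed two-sided ideals in a unital C*-algebra A and let J_3 = J_1 ∩ J_2. Then for every x ∈ A, the spectrum of x in A/J_3 equals the union of the spectra of x in A/J_1 and in A/J_2: σ_3(x) = σ_1(x) ∪ σ_2(x). -/
/-- If `J_1, J_2` are closed two-sided ideals in a unital C*-algebra `A` and
`J_3 = J_1 ∩ J_2`, then `σ_3(x) = σ_1(x) ∪ σ_2(x)` for every `x ∈ A`.  The quotients
`A / J_i` are represented by surjective *-algebra homomorphisms `π i` with kernel `J_i`;
the condition `ker π₃ = ker π₁ ∩ ker π₂` encodes `J_3 = J_1 ∩ J_2`. -/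
theorem stmt8 {A B₁ B₂ B₃ : Type*} [CStarAlgebra A] [CStarAlgebra B₁] [CStarAlgebra B₂]
    [CStarAlgebra B₃]
    (π₁ : A →⋆ₐ[ℂ] B₁) (π₂ : A →⋆ₐ[ℂ] B₂) (π₃ : A →⋆ₐ[ℂ] B₃)
    (h₁ : Function.Surjective π₁) (h₂ : Function.Surjective π₂)
    (h₃ : Function.Surjective π₃)
    (hker : ∀ a : A, π₃ a = 0 ↔ (π₁ a = 0 ∧ π₂ a = 0))
    (x : A) :
    spectrum ℂ (π₃ x) = spectrum ℂ (π₁ x) ∪ spectrum ℂ (π₂ x) := by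
  have key : ∀ a : A, IsUnit (π₃ a) ↔ IsUnit (π₁ a) ∧ IsUnit (π₂ a) := by
    intro a
    constructor
    · intro hu
      obtain ⟨y, hy⟩ := h₃ (↑hu.unit⁻¹ : B₃)
      have hl : π₃ (y * a - 1) = 0 := by
        rw [map_sub, map_mul, map_one, hy, hu.val_inv_mul, sub_self]
      have hr : π₃ (a * y - 1) = 0 := by
        rw [map_sub, map_mul, map_one, hy, hu.mul_val_inv, sub_self]
      obtain ⟨hl1, hl2⟩ := (hker _).mp hl
      obtain ⟨hr1, hr2⟩ := (hker _).mp hr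
      rw [map_sub, map_mul, map_one, sub_eq_zero] at hl1 hl2 hr1 hr2
      exact ⟨isUnit_iff_exists.mpr ⟨π₁ y, hr1, hl1⟩,
             isUnit_iff_exists.mpr ⟨π₂ y, hr2, hl2⟩⟩
    · rintro ⟨hu₁, hu₂⟩
      obtain ⟨y₁, hy₁⟩ := h₁ (↑hu₁.unit⁻¹ : B₁)
      obtain ⟨y₂, hy₂⟩ := h₂ (↑hu₂.unit⁻¹ : B₂)
      have he₁ : π₁ (y₁ * a - 1) = 0 := by
        rw [map_sub, map_mul, map_one, hy₁, hu₁.val_inv_mul, sub_self]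
      have hf₁ : π₁ (a * y₁ - 1) = 0 := by
        rw [map_sub, map_mul, map_one, hy₁, hu₁.mul_val_inv, sub_self]
      have he₂ : π₂ (y₂ * a - 1) = 0 := by
        rw [map_sub, map_mul, map_one, hy₂, hu₂.val_inv_mul, sub_self]
      have hf₂ : π₂ (a * y₂ - 1) = 0 := by
        rw [map_sub, map_mul, map_one, hy₂, hu₂.mul_val_inv, sub_self]
      set y : A := y₂ + y₁ - y₂ * a * y₁ with hy
      set z : A := y₂ + y₁ - y₁ * a * y₂ with hz
      have hya : y * a - 1 = -((y₂ * a - 1) * (y₁ * a - 1)) := by rw [hy]; noncomm_ring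
      have haz : a * z - 1 = -((a * y₁ - 1) * (a * y₂ - 1)) := by rw [hz]; noncomm_ring
      have hyl : π₃ (y * a - 1) = 0 := by
        rw [hya, (hker _)]
        constructor
        · rw [map_neg, map_mul, he₁, mul_zero, neg_zero]
        · rw [map_neg, map_mul, he₂, zero_mul, neg_zero]
      have hzr : π₃ (a * z - 1) = 0 := by
        rw [haz, (hker _)]
        constructor
        · rw [map_neg, map_mul, hf₁, zero_mul, neg_zero]
        · rw [map_neg, map_mul, hf₂, mul_zero, neg_zero]
      rw [map_sub, map_mul, map_one, sub_eq_zero] at hyl hzr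
      have hyz : π₃ y = π₃ z := by
        calc π₃ y = π₃ y * (π₃ a * π₃ z) := by rw [hzr, mul_one]
        _ = (π₃ y * π₃ a) * π₃ z := by rw [mul_assoc]
        _ = π₃ z := by rw [hyl, one_mul]
      exact isUnit_iff_exists.mpr ⟨π₃ z, hzr, by rw [← hyz]; exact hyl⟩
  ext ζ
  simp only [Set.mem_union, spectrum.mem_iff]
  have := key (algebraMap ℂ A ζ - x)
  rw [map_sub, map_sub, map_sub, AlgHomClass.commutes, AlgHomClass.commutes,
    AlgHomClass.commutes] at this
  tauto
end

section
/- Let H = H_1 ⊗ H_2 be a Hilbert space tensor product, {P_n} an increasing sequence of finite-rank projections on H_1 converging strongly to I_1, and p_n = P_n ⊗ I_2. Then the closed ideal J associated to {p_n} equals the closed linear span of all operators A_1 ⊗ A_2 with A_1 compact on H_1 and A_2 bounded on H_2. -/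
open Filter Topology

namespace Stmt9Aux

variable {E F : Type*} [NormedAddCommGroup E] [InnerProductSpace ℂ E] [CompleteSpace E]
  [NormedAddCommGroup F] [InnerProductSpace ℂ F] [CompleteSpace F]

lemma norm_le_one_of_sa_idem {Q : E →L[ℂ] E} (h1 : IsSelfAdjoint Q)
    (h2 : IsIdempotentElem Q) : ‖Q‖ ≤ 1 := by
  have h := ContinuousLinearMap.norm_adjoint_comp_self Q
  rw [← ContinuousLinearMap.star_eq_adjoint, h1.star_eq] at h
  have h3 : Q ∘L Q = Q := h2
  rw [h3] at h
  nlinarith [norm_nonneg Q]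

omit [CompleteSpace E] [CompleteSpace F] in
lemma opNorm_le_of_unit {f : E →L[ℂ] F} {c : ℝ} (hc : 0 ≤ c)
    (h : ∀ u : E, ‖u‖ ≤ 1 → ‖f u‖ ≤ c) : ‖f‖ ≤ c := by
  refine f.opNorm_le_bound' hc fun x hx => ?_
  have hx' : (0:ℝ) < ‖x‖ := lt_of_le_of_ne (norm_nonneg x) (Ne.symm hx)
  have hu : ‖(‖x‖⁻¹ : ℝ) • x‖ ≤ 1 := by
    rw [norm_smul, Real.norm_eq_abs, abs_of_nonneg (by positivity)]
    rw [inv_mul_cancel₀ (ne_of_gt hx')]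
  have := h _ hu
  rw [ContinuousLinearMap.map_smul_of_tower, norm_smul, Real.norm_eq_abs, abs_of_nonneg (by positivity)] at this
  calc ‖f x‖ = ‖x‖ * (‖x‖⁻¹ * ‖f x‖) := by field_simp
  _ ≤ ‖x‖ * c := by nlinarith
  _ = c * ‖x‖ := mul_comm _ _

omit [CompleteSpace E] [CompleteSpace F] in
lemma tendsto_comp_compact (Q : ℕ → E →L[ℂ] E) (hQn : ∀ n, ‖Q n‖ ≤ 1)
    (hQ : ∀ v : E, Tendsto (fun n => Q n v) atTop (𝓝 0))
    (K : E →L[ℂ] E) (hK : IsCompactOperator ⇑K) :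
    Tendsto (fun n => ‖Q n ∘L K‖) atTop (𝓝 0) := by
  rw [Metric.tendsto_atTop]
  intro ε hε
  have hC : IsCompact (closure (⇑K '' Metric.closedBall 0 1)) :=
    IsCompactOperator.isCompact_closure_image_closedBall (𝕜₁ := ℂ)
      (f := (K : E →ₗ[ℂ] E)) hK 1
  obtain ⟨t, htf, hts⟩ := (Metric.totallyBounded_iff.mp hC.totallyBounded) (ε/4) (by linarith)
  have hev : ∀ᶠ n in atTop, ∀ y ∈ t, ‖Q n y‖ < ε/4 := by
    rw [Filter.eventually_all_finite htf]
    intro y hy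
    have := (hQ y).eventually (Metric.ball_mem_nhds (0:E) (show (0:ℝ) < ε/4 by linarith))
    filter_upwards [this] with n hn
    simpa [Metric.mem_ball, dist_eq_norm] using hn
  rw [Filter.eventually_atTop] at hev
  obtain ⟨N, hN⟩ := hev
  refine ⟨N, fun n hn => ?_⟩
  have hb : ‖Q n ∘L K‖ ≤ ε/2 := by
    refine opNorm_le_of_unit (by linarith) fun u hu => ?_
    have hKu : K u ∈ closure (⇑K '' Metric.closedBall 0 1) :=
      subset_closure ⟨u, by simpa [Metric.mem_closedBall, dist_eq_norm] using hu, rfl⟩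
    obtain ⟨y, hy, hdy⟩ := Set.mem_iUnion₂.mp (hts hKu)
    have h1 : ‖Q n (K u - y)‖ ≤ ε/4 := by
      calc ‖Q n (K u - y)‖ ≤ ‖Q n‖ * ‖K u - y‖ := (Q n).le_opNorm _
      _ ≤ 1 * (ε/4) := by
          apply mul_le_mul (hQn n) ?_ (norm_nonneg _) zero_le_one
          rw [Metric.mem_ball, dist_eq_norm] at hdy
          exact le_of_lt hdy
      _ = ε/4 := one_mul _
    have h2 : ‖Q n y‖ < ε/4 := hN n hn y hy
    calc ‖(Q n ∘L K) u‖ = ‖Q n (K u - y) + Q n y‖ := by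
          simp [ContinuousLinearMap.comp_apply, map_sub]
    _ ≤ ‖Q n (K u - y)‖ + ‖Q n y‖ := norm_add_le _ _
    _ ≤ ε/4 + ε/4 := add_le_add h1 (le_of_lt h2)
    _ = ε/2 := by ring
  rw [Real.dist_eq, sub_zero, abs_of_nonneg (norm_nonneg _)]
  linarith [hb, norm_nonneg (Q n ∘L K)]

end Stmt9Aux

section Main

variable {H₁ H₂ H : Type*}
    [NormedAddCommGroup H₁] [InnerProductSpace ℂ H₁] [CompleteSpace H₁]
    [NormedAddCommGroup H₂] [InnerProductSpace ℂ H₂] [CompleteSpace H₂]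
    [NormedAddCommGroup H] [InnerProductSpace ℂ H] [CompleteSpace H]

omit [CompleteSpace H₁] [CompleteSpace H₂] [CompleteSpace H] in
lemma stmt9_ext (tp : H₁ →L[ℂ] H₂ →L[ℂ] H)
    (htp_dense : Dense (Submodule.span ℂ {v : H | ∃ x y, v = tp x y} : Set H))
    {S T : H →L[ℂ] H} (h : ∀ x y, S (tp x y) = T (tp x y)) : S = T := by
  have h0 : Set.EqOn ⇑S ⇑T {v : H | ∃ x y, v = tp x y} := by
    rintro v ⟨x, y, rfl⟩; exact h x y
  have h1 : Set.EqOn ⇑S ⇑T (Submodule.span ℂ {v : H | ∃ x y, v = tp x y} : Set H) :=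
    fun v hv => LinearMap.eqOn_span (f := (S : H →ₗ[ℂ] H)) (g := (T : H →ₗ[ℂ] H)) h0 hv
  have := Continuous.ext_on htp_dense S.continuous T.continuous h1
  exact ContinuousLinearMap.ext fun v => congrFun this v

end Main

set_option maxHeartbeats 2000000 in
/-- Let `H = H₁ ⊗ H₂` be a Hilbert-space tensor product, axiomatized by a
continuous bilinear map `tp` with `⟪tp x y, tp x' y'⟫ = ⟪x,x'⟫⟪y,y'⟫` and dense span, and
an operator tensor product `otimes` with `otimes A₁ A₂ (tp x y) = tp (A₁ x) (A₂ y)` and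
`‖otimes A₁ A₂‖ ≤ ‖A₁‖ ‖A₂‖`.  If `P n` is an increasing sequence of finite-rank
orthogonal projections on `H₁` converging strongly to the identity and `p n = P n ⊗ I₂`,
then the closed ideal `J` associated to `p n` equals the closed linear span of the
operators `A₁ ⊗ A₂` with `A₁` compact and `A₂` bounded. -/
theorem stmt9 {H₁ H₂ H : Type*}
    [NormedAddCommGroup H₁] [InnerProductSpace ℂ H₁] [CompleteSpace H₁]
    [NormedAddCommGroup H₂] [InnerProductSpace ℂ H₂] [CompleteSpace H₂]
    [NormedAddCommGroup H] [InnerProductSpace ℂ H] [CompleteSpace H]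
    (tp : H₁ →L[ℂ] H₂ →L[ℂ] H)
    (htp_inner : ∀ x x' : H₁, ∀ y y' : H₂,
      (inner ℂ (tp x y) (tp x' y') : ℂ) = (inner ℂ x x' : ℂ) * (inner ℂ y y' : ℂ))
    (htp_dense : Dense (Submodule.span ℂ {v : H | ∃ x y, v = tp x y} : Set H))
    (otimes : (H₁ →L[ℂ] H₁) → (H₂ →L[ℂ] H₂) → (H →L[ℂ] H))
    (hot : ∀ (A₁ : H₁ →L[ℂ] H₁) (A₂ : H₂ →L[ℂ] H₂) (x : H₁) (y : H₂),
      otimes A₁ A₂ (tp x y) = tp (A₁ x) (A₂ y))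
    (hot_norm : ∀ A₁ A₂, ‖otimes A₁ A₂‖ ≤ ‖A₁‖ * ‖A₂‖)
    (P : ℕ → H₁ →L[ℂ] H₁)
    (hproj : ∀ n, IsSelfAdjoint (P n) ∧ IsIdempotentElem (P n))
    (hfinrank : ∀ n, FiniteDimensional ℂ ↥(LinearMap.range ((P n) : H₁ →ₗ[ℂ] H₁)))
    (hmono : ∀ m n, m ≤ n → P m * P n = P m ∧ P n * P m = P m)
    (hstrong : ∀ v : H₁, Tendsto (fun n => P n v) atTop (𝓝 v))
    (p : ℕ → H →L[ℂ] H) (hp : ∀ n, p n = otimes (P n) 1) :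
    closure {x : H →L[ℂ] H | ∃ n, p n * x = x ∧ x * p n = x}
      = closure (Submodule.span ℂ {T : H →L[ℂ] H |
          ∃ (A₁ : H₁ →L[ℂ] H₁) (A₂ : H₂ →L[ℂ] H₂),
            IsCompactOperator ⇑A₁ ∧ T = otimes A₁ A₂} : Set (H →L[ℂ] H)) := by
  classical
  have ext : ∀ {S T : H →L[ℂ] H}, (∀ x y, S (tp x y) = T (tp x y)) → S = T :=
    fun {S T} h => stmt9_ext tp htp_dense h
  -- multiplicativity of otimes
  have hcomp : ∀ A B C D, otimes A B * otimes C D = otimes (A * C) (B * D) := by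
    intro A B C D
    apply ext
    intro x y
    simp [ContinuousLinearMap.mul_apply, hot]
  -- subtractivity of otimes in the first argument
  have hsub : ∀ A B C, otimes A C - otimes B C = otimes (A - B) C := by
    intro A B C
    apply ext
    intro x y
    simp only [ContinuousLinearMap.sub_apply, hot, map_sub]
  -- basic projection facts
  have hPP : ∀ n, P n * P n = P n := fun n => (hproj n).2
  have hp_mul : ∀ m n, n ≤ m → p m * p n = p n ∧ p n * p m = p n := by
    intro m n h
    obtain ⟨h1, h2⟩ := hmono n m h
    constructor
    · rw [hp, hp, hcomp, h2, one_mul]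
    · rw [hp, hp, hcomp, h1, one_mul]
  have keyL : ∀ k l (x : H →L[ℂ] H), l ≤ k → p l * x = x → p k * x = x := by
    intro k l x h hx
    conv_lhs => rw [← hx, ← mul_assoc, (hp_mul k l h).1]
    exact hx
  have keyR : ∀ k l (x : H →L[ℂ] H), l ≤ k → x * p l = x → x * p k = x := by
    intro k l x h hx
    conv_lhs => rw [← hx, mul_assoc, (hp_mul k l h).2]
    exact hx
  -- the set J as a submodule
  set Ssub : Submodule ℂ (H →L[ℂ] H) :=
    { carrier := {x : H →L[ℂ] H | ∃ n, p n * x = x ∧ x * p n = x}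
      zero_mem' := ⟨0, by simp, by simp⟩
      add_mem' := by
        rintro x y ⟨m, hx1, hx2⟩ ⟨n, hy1, hy2⟩
        refine ⟨max m n, ?_, ?_⟩
        · rw [mul_add, keyL _ m x (le_max_left _ _) hx1, keyL _ n y (le_max_right _ _) hy1]
        · rw [add_mul, keyR _ m x (le_max_left _ _) hx2, keyR _ n y (le_max_right _ _) hy2]
      smul_mem' := by
        rintro c x ⟨n, hx1, hx2⟩
        exact ⟨n, by rw [mul_smul_comm, hx1], by rw [smul_mul_assoc, hx2]⟩ } with hSsub
  set gen : Set (H →L[ℂ] H) := {T : H →L[ℂ] H |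
      ∃ (A₁ : H₁ →L[ℂ] H₁) (A₂ : H₂ →L[ℂ] H₂),
        IsCompactOperator ⇑A₁ ∧ T = otimes A₁ A₂} with hgen
  -- ⊇ : every generator is in the closure of Ssub
  have hQsa : ∀ n, IsSelfAdjoint (1 - P n) := fun n =>
    (IsSelfAdjoint.one (R := H₁ →L[ℂ] H₁)).sub (hproj n).1
  have hQid : ∀ n, IsIdempotentElem (1 - P n) := fun n => (hproj n).2.one_sub
  have hQn : ∀ n, ‖(1:H₁ →L[ℂ] H₁) - P n‖ ≤ 1 := fun n =>
    Stmt9Aux.norm_le_one_of_sa_idem (hQsa n) (hQid n)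
  have hPn1 : ∀ n, ‖P n‖ ≤ 1 := fun n =>
    Stmt9Aux.norm_le_one_of_sa_idem (hproj n).1 (hproj n).2
  have hQstrong : ∀ v : H₁, Tendsto (fun n => ((1:H₁ →L[ℂ] H₁) - P n) v) atTop (𝓝 0) := by
    intro v
    have h := Tendsto.sub (tendsto_const_nhds (x := v) (f := atTop (α := ℕ))) (hstrong v)
    simpa using h
  have hgen_closure : ∀ T ∈ gen, T ∈ closure (Ssub : Set (H →L[ℂ] H)) := by
    rintro T ⟨A₁, A₂, hA₁, rfl⟩
    -- ‖(1 - Pₙ) A₁‖ → 0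
    have h1 : Tendsto (fun n => ‖((1:H₁ →L[ℂ] H₁) - P n) ∘L A₁‖) atTop (𝓝 0) :=
      Stmt9Aux.tendsto_comp_compact _ hQn hQstrong A₁ hA₁
    -- A₁* A₁ is compact
    have hAA : IsCompactOperator ⇑((ContinuousLinearMap.adjoint A₁) ∘L A₁) := by
      have := hA₁.clm_comp (ContinuousLinearMap.adjoint A₁)
      exact this
    have h2 : Tendsto (fun n => ‖((1:H₁ →L[ℂ] H₁) - P n) ∘L
        ((ContinuousLinearMap.adjoint A₁) ∘L A₁)‖) atTop (𝓝 0) :=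
      Stmt9Aux.tendsto_comp_compact _ hQn hQstrong _ hAA
    -- ‖A₁ (1 - Pₙ)‖² ≤ ‖(1 - Pₙ) (A₁* A₁)‖
    have h3 : ∀ n, ‖A₁ ∘L ((1:H₁ →L[ℂ] H₁) - P n)‖ ^ 2 ≤
        ‖((1:H₁ →L[ℂ] H₁) - P n) ∘L ((ContinuousLinearMap.adjoint A₁) ∘L A₁)‖ := by
      intro n
      have hcstar := ContinuousLinearMap.norm_adjoint_comp_self (A₁ ∘L ((1:H₁ →L[ℂ] H₁) - P n))
      have hadj : ContinuousLinearMap.adjoint (A₁ ∘L ((1:H₁ →L[ℂ] H₁) - P n)) =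
          ((1:H₁ →L[ℂ] H₁) - P n) ∘L ContinuousLinearMap.adjoint A₁ := by
        rw [ContinuousLinearMap.adjoint_comp, ← ContinuousLinearMap.star_eq_adjoint,
          (hQsa n).star_eq]
      rw [hadj] at hcstar
      have hassoc : (((1:H₁ →L[ℂ] H₁) - P n) ∘L ContinuousLinearMap.adjoint A₁) ∘L
          (A₁ ∘L ((1:H₁ →L[ℂ] H₁) - P n)) =
          (((1:H₁ →L[ℂ] H₁) - P n) ∘L ((ContinuousLinearMap.adjoint A₁) ∘L A₁)) ∘L
          ((1:H₁ →L[ℂ] H₁) - P n) := by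
        simp [ContinuousLinearMap.comp_assoc]
      rw [hassoc] at hcstar
      calc ‖A₁ ∘L ((1:H₁ →L[ℂ] H₁) - P n)‖ ^ 2
          = ‖A₁ ∘L ((1:H₁ →L[ℂ] H₁) - P n)‖ * ‖A₁ ∘L ((1:H₁ →L[ℂ] H₁) - P n)‖ := sq _
      _ = ‖(((1:H₁ →L[ℂ] H₁) - P n) ∘L ((ContinuousLinearMap.adjoint A₁) ∘L A₁)) ∘L
            ((1:H₁ →L[ℂ] H₁) - P n)‖ := hcstar.symm
      _ ≤ ‖((1:H₁ →L[ℂ] H₁) - P n) ∘L ((ContinuousLinearMap.adjoint A₁) ∘L A₁)‖ *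
            ‖(1:H₁ →L[ℂ] H₁) - P n‖ := ContinuousLinearMap.opNorm_comp_le _ _
      _ ≤ ‖((1:H₁ →L[ℂ] H₁) - P n) ∘L ((ContinuousLinearMap.adjoint A₁) ∘L A₁)‖ * 1 := by
            apply mul_le_mul_of_nonneg_left (hQn n) (norm_nonneg _)
      _ = _ := mul_one _
    have h4 : Tendsto (fun n => ‖A₁ ∘L ((1:H₁ →L[ℂ] H₁) - P n)‖) atTop (𝓝 0) := by
      have hsq : Tendsto (fun n => Real.sqrt ‖((1:H₁ →L[ℂ] H₁) - P n) ∘L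
          ((ContinuousLinearMap.adjoint A₁) ∘L A₁)‖) atTop (𝓝 0) := by
        have := h2.sqrt
        simpa using this
      refine squeeze_zero (fun n => norm_nonneg _) (fun n => ?_) hsq
      rw [show ‖A₁ ∘L ((1:H₁ →L[ℂ] H₁) - P n)‖ =
        Real.sqrt (‖A₁ ∘L ((1:H₁ →L[ℂ] H₁) - P n)‖ ^ 2) by rw [Real.sqrt_sq (norm_nonneg _)]]
      exact Real.sqrt_le_sqrt (h3 n)
    -- ‖A₁ - Pₙ A₁ Pₙ‖ → 0
    have h5 : Tendsto (fun n => ‖A₁ - P n * A₁ * P n‖) atTop (𝓝 0) := by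
      have hbd : ∀ n, ‖A₁ - P n * A₁ * P n‖ ≤
          ‖((1:H₁ →L[ℂ] H₁) - P n) ∘L A₁‖ + ‖A₁ ∘L ((1:H₁ →L[ℂ] H₁) - P n)‖ := by
        intro n
        have hdecomp : A₁ - P n * A₁ * P n =
            ((1:H₁ →L[ℂ] H₁) - P n) * A₁ + P n * (A₁ * ((1:H₁ →L[ℂ] H₁) - P n)) := by
          noncomm_ring
        rw [hdecomp]
        calc ‖((1:H₁ →L[ℂ] H₁) - P n) * A₁ + P n * (A₁ * ((1:H₁ →L[ℂ] H₁) - P n))‖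
            ≤ ‖((1:H₁ →L[ℂ] H₁) - P n) * A₁‖ + ‖P n * (A₁ * ((1:H₁ →L[ℂ] H₁) - P n))‖ :=
              norm_add_le _ _
        _ ≤ ‖((1:H₁ →L[ℂ] H₁) - P n) * A₁‖ + ‖P n‖ * ‖A₁ * ((1:H₁ →L[ℂ] H₁) - P n)‖ := by
              gcongr
              exact norm_mul_le _ _
        _ ≤ ‖((1:H₁ →L[ℂ] H₁) - P n) * A₁‖ + 1 * ‖A₁ * ((1:H₁ →L[ℂ] H₁) - P n)‖ := by
              gcongr
              exact hPn1 n
        _ = ‖((1:H₁ →L[ℂ] H₁) - P n) ∘L A₁‖ + ‖A₁ ∘L ((1:H₁ →L[ℂ] H₁) - P n)‖ := by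
              rw [one_mul]; rfl
      have hsum : Tendsto (fun n => ‖((1:H₁ →L[ℂ] H₁) - P n) ∘L A₁‖ +
          ‖A₁ ∘L ((1:H₁ →L[ℂ] H₁) - P n)‖) atTop (𝓝 0) := by
        have := h1.add h4
        simpa using this
      exact squeeze_zero (fun n => norm_nonneg _) hbd hsum
    -- the approximating sequence
    refine mem_closure_of_tendsto (f := fun n => otimes (P n * A₁ * P n) A₂) (b := atTop) ?_ ?_
    · rw [tendsto_iff_norm_sub_tendsto_zero]
      have hlim : Tendsto (fun n => ‖A₁ - P n * A₁ * P n‖ * ‖A₂‖) atTop (𝓝 0) := by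
        have := h5.mul_const ‖A₂‖
        simpa using this
      refine squeeze_zero (fun n => norm_nonneg _) (fun n => ?_) hlim
      · rw [hsub]
        calc ‖otimes (P n * A₁ * P n - A₁) A₂‖ ≤ ‖P n * A₁ * P n - A₁‖ * ‖A₂‖ := hot_norm _ _
        _ = ‖A₁ - P n * A₁ * P n‖ * ‖A₂‖ := by rw [norm_sub_rev]
    · filter_upwards with n
      refine ⟨n, ?_, ?_⟩
      · rw [hp, hcomp, one_mul, ← mul_assoc, ← mul_assoc, hPP]
      · rw [hp, hcomp, mul_one, mul_assoc, mul_assoc, hPP, ← mul_assoc]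
  -- ⊆ : every element of Ssub is a finite sum of elementary tensors
  have hS_span : (Ssub : Set (H →L[ℂ] H)) ⊆ (Submodule.span ℂ gen : Set (H →L[ℂ] H)) := by
    rintro x ⟨n, hx1, hx2⟩
    haveI := hfinrank n
    set V : Submodule ℂ H₁ := LinearMap.range ((P n : H₁ →ₗ[ℂ] H₁)) with hV
    let b := stdOrthonormalBasis ℂ V
    set e : Fin (Module.finrank ℂ V) → H₁ := fun i => ((b i : V) : H₁) with he
    have hPapp : ∀ v : H₁, P n (P n v) = P n v := by
      intro v
      have := congrArg (fun T : H₁ →L[ℂ] H₁ => T v) (hPP n)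
      simpa [ContinuousLinearMap.mul_apply] using this
    have hPe : ∀ i, P n (e i) = e i := by
      intro i
      obtain ⟨u, hu⟩ := (b i).2
      have hu' : P n u = e i := hu
      rw [← hu']
      exact hPapp u
    have hinner_move : ∀ (i : _) (v : H₁), (inner ℂ (e i) (P n v) : ℂ) = inner ℂ (e i) v := by
      intro i v
      rw [← (hproj n).1.adjoint_eq, ContinuousLinearMap.adjoint_inner_right, hPe i]
    have hsum : ∀ v : H₁, P n v = ∑ i, (inner ℂ (e i) v : ℂ) • e i := by
      intro v
      have hm : P n v ∈ V := ⟨v, rfl⟩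
      have hrepr := b.sum_repr' (⟨P n v, hm⟩ : V)
      have := congrArg (Subtype.val : V → H₁) hrepr
      simp only [Submodule.coe_sum, Submodule.coe_smul] at this
      rw [← this]
      apply Finset.sum_congr rfl
      intro i _
      congr 1
      rw [Submodule.coe_inner]
      exact hinner_move i v
    -- the partial isometries
    set u : Fin (Module.finrank ℂ V) → H₂ →L[ℂ] H := fun i => tp (e i) with hu
    set ustar : Fin (Module.finrank ℂ V) → H →L[ℂ] H₂ :=
      fun i => ContinuousLinearMap.adjoint (u i) with hustar
    have hustar_apply : ∀ i (a : H₁) (w : H₂),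
        ustar i (tp a w) = (inner ℂ (e i) a : ℂ) • w := by
      intro i a w
      apply ext_inner_left ℂ
      intro z
      rw [ContinuousLinearMap.adjoint_inner_right]
      rw [show (u i) z = tp (e i) z from rfl, htp_inner, inner_smul_right]
    set D : Fin (Module.finrank ℂ V) → H →L[ℂ] H := fun i => (u i) ∘L (ustar i) with hD
    have hDsum : ∑ i, D i = p n := by
      apply ext
      intro a w
      rw [ContinuousLinearMap.sum_apply]
      have hL : ∀ i, D i (tp a w) = (inner ℂ (e i) a : ℂ) • tp (e i) w := by
        intro i
        rw [show D i (tp a w) = u i (ustar i (tp a w)) from rfl, hustar_apply, map_smul]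
      rw [Finset.sum_congr rfl fun i _ => hL i]
      rw [hp, hot, ContinuousLinearMap.one_apply, hsum a, map_sum,
        ContinuousLinearMap.sum_apply]
      apply Finset.sum_congr rfl
      intro i _
      rw [map_smul, ContinuousLinearMap.smul_apply]
    -- rank-one operators and compressions
    set Eij : Fin (Module.finrank ℂ V) → Fin (Module.finrank ℂ V) → H₁ →L[ℂ] H₁ :=
      fun i j => (ContinuousLinearMap.toSpanSingleton ℂ (e i)).comp
        ((innerSL ℂ (e j)) : H₁ →L[ℂ] ℂ) with hEij
    have hEij_apply : ∀ i j (a : H₁), Eij i j a = (inner ℂ (e j) a : ℂ) • e i := by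
      intro i j a
      simp [hEij, ContinuousLinearMap.toSpanSingleton_apply]
    have hEc : ∀ i j, IsCompactOperator ⇑(Eij i j) := by
      intro i j
      have hfun : IsCompactOperator ⇑((innerSL ℂ (e j)) : H₁ →L[ℂ] ℂ) := by
        refine ⟨Metric.closedBall 0 (‖e j‖ + 1), isCompact_closedBall _ _, ?_⟩
        refine Filter.mem_of_superset (Metric.ball_mem_nhds 0 one_pos) ?_
        intro a ha
        rw [Set.mem_preimage, Metric.mem_closedBall, dist_zero_right]
        rw [Metric.mem_ball, dist_zero_right] at ha
        calc ‖(innerSL ℂ (e j)) a‖ ≤ ‖e j‖ * ‖a‖ := by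
              simpa using norm_inner_le_norm (𝕜 := ℂ) (e j) a
        _ ≤ ‖e j‖ + 1 := by nlinarith [norm_nonneg (e j), norm_nonneg a]
      exact hfun.clm_comp (ContinuousLinearMap.toSpanSingleton ℂ (e i))
    set B : Fin (Module.finrank ℂ V) → Fin (Module.finrank ℂ V) → H₂ →L[ℂ] H₂ :=
      fun i j => (ustar i) ∘L (x ∘L (u j)) with hB
    have hterm : ∀ i j, D i * x * D j = otimes (Eij i j) (B i j) := by
      intro i j
      apply ext
      intro a w
      have hDj : D j (tp a w) = (inner ℂ (e j) a : ℂ) • tp (e j) w := by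
        rw [show D j (tp a w) = u j (ustar j (tp a w)) from rfl, hustar_apply, map_smul]
      rw [ContinuousLinearMap.mul_apply, ContinuousLinearMap.mul_apply, hDj, map_smul, map_smul]
      rw [hot, hEij_apply, map_smul, ContinuousLinearMap.smul_apply]
      congr 1
    have hxsum : x = ∑ i, ∑ j, otimes (Eij i j) (B i j) := by
      have hx0 : x = p n * x * p n := by rw [hx1, hx2]
      calc x = (∑ i, D i) * x * (∑ j, D j) := by rw [hDsum, ← hx0]
      _ = ∑ i, ∑ j, D i * x * D j := by
          rw [Finset.sum_mul, Finset.sum_mul]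
          apply Finset.sum_congr rfl
          intro i _
          rw [Finset.mul_sum]
      _ = ∑ i, ∑ j, otimes (Eij i j) (B i j) := by
          apply Finset.sum_congr rfl
          intro i _
          exact Finset.sum_congr rfl fun j _ => hterm i j
    rw [hxsum]
    apply Submodule.sum_mem
    intro i _
    apply Submodule.sum_mem
    intro j _
    exact Submodule.subset_span ⟨Eij i j, B i j, hEc i j, rfl⟩
  -- assemble
  apply Set.Subset.antisymm
  · calc closure {x : H →L[ℂ] H | ∃ n, p n * x = x ∧ x * p n = x}
        = closure (Ssub : Set (H →L[ℂ] H)) := rfl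
    _ ⊆ closure (closure (Submodule.span ℂ gen : Set (H →L[ℂ] H))) :=
        closure_mono (hS_span.trans subset_closure)
    _ = closure (Submodule.span ℂ gen : Set (H →L[ℂ] H)) := closure_closure
  · refine closure_minimal ?_ isClosed_closure
    have : gen ⊆ closure (Ssub : Set (H →L[ℂ] H)) := fun T hT => hgen_closure T hT
    have hspan : Submodule.span ℂ gen ≤ Ssub.topologicalClosure := by
      rw [Submodule.span_le]
      intro T hT
      exact hgen_closure T hT
    intro T hT
    exact hspan hT
end

section
/- Let S, T be nonempty open subsets of X that are asymptotically independent, i.e. for all n ≥ 1 there exists m with S(n) ∩ T(n) ⊆ (S ∩ T)(m), where S(r) = {x : d(x,S) < r}. Then the associated ideals in the standard C*-algebra satisfy J_{S∩T} = J_S ∩ J_T, and hence σ_{S∩T}(A) = σ_S(A) ∪ σ_T(A) for every A in the algebra. -/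
open MeasureTheory Metric

noncomputable section Stmt15AuxSection
namespace Stmt15Aux
open Set ContinuousLinearMap

local notation "⟪" x ", " y "⟫" => @inner ℂ _ _ x y

variable {X : Type*} [MetricSpace X] [TopologicalSpace.SeparableSpace X] [MeasurableSpace X]
    {μ : Measure X}
    {P : Set X → (Lp ℂ 2 μ →L[ℂ] Lp ℂ 2 μ)}

set_option linter.unusedSectionVars false

theorem Pmul (hP : ∀ (S : Set X) (f : Lp ℂ 2 μ), (P S f : X → ℂ) =ᵐ[μ] S.indicator ⇑f)
    (U V : Set X) : P U * P V = P (U ∩ V) := by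
  ext f
  rw [ContinuousLinearMap.mul_apply]
  filter_upwards [hP U (P V f), hP (U ∩ V) f, (hP V f).indicator (s := U)] with x h1 h2 h3
  rw [h1, h2, h3]
  by_cases hU : x ∈ U <;> by_cases hV : x ∈ V <;>
    simp [Set.indicator_apply, hU, hV]

theorem Pempty (hP : ∀ (S : Set X) (f : Lp ℂ 2 μ), (P S f : X → ℂ) =ᵐ[μ] S.indicator ⇑f) :
    P (∅ : Set X) = 0 := by
  ext f
  rw [ContinuousLinearMap.zero_apply]
  filter_upwards [hP ∅ f, Lp.coeFn_zero (E := ℂ) (p := 2) (μ := μ)] with x h1 h2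
  rw [h1, h2]
  simp

theorem Pabsorb_left (hP : ∀ (S : Set X) (f : Lp ℂ 2 μ), (P S f : X → ℂ) =ᵐ[μ] S.indicator ⇑f)
    {W V : Set X} (h : W ⊆ V) : P V * P W = P W := by
  rw [Pmul hP, Set.inter_eq_self_of_subset_right h]

theorem Pabsorb_right (hP : ∀ (S : Set X) (f : Lp ℂ 2 μ), (P S f : X → ℂ) =ᵐ[μ] S.indicator ⇑f)
    {W V : Set X} (h : W ⊆ V) : P W * P V = P W := by
  rw [Pmul hP, Set.inter_eq_self_of_subset_left h]

theorem Pcompl (hP : ∀ (S : Set X) (f : Lp ℂ 2 μ), (P S f : X → ℂ) =ᵐ[μ] S.indicator ⇑f)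
    (U : Set X) : P U + P Uᶜ = 1 := by
  ext f
  rw [ContinuousLinearMap.add_apply, ContinuousLinearMap.one_apply]
  filter_upwards [hP U f, hP Uᶜ f, Lp.coeFn_add (P U f) (P Uᶜ f)] with x h1 h2 h3
  rw [h3, Pi.add_apply, h1, h2]
  by_cases hU : x ∈ U <;> simp [Set.indicator_apply, hU]

theorem Pnorm (hP : ∀ (S : Set X) (f : Lp ℂ 2 μ), (P S f : X → ℂ) =ᵐ[μ] S.indicator ⇑f)
    (U : Set X) : ‖P U‖ ≤ 1 := by
  refine ContinuousLinearMap.opNorm_le_bound _ zero_le_one (fun f => ?_)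
  rw [one_mul, Lp.norm_def, Lp.norm_def]
  refine ENNReal.toReal_mono (Lp.eLpNorm_ne_top f) ?_
  rw [eLpNorm_congr_ae (hP U f)]
  exact eLpNorm_indicator_le _

theorem Padj (hP : ∀ (S : Set X) (f : Lp ℂ 2 μ), (P S f : X → ℂ) =ᵐ[μ] S.indicator ⇑f)
    (U : Set X) : ContinuousLinearMap.adjoint (P U) = P U := by
  symm
  rw [ContinuousLinearMap.eq_adjoint_iff]
  intro f g
  rw [L2.inner_def, L2.inner_def]
  refine integral_congr_ae ?_
  filter_upwards [hP U f, hP U g] with x h1 h2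
  rw [h1, h2]
  by_cases hU : x ∈ U <;> simp [Set.indicator_apply, hU]

/-- finite propagation predicate -/
def prop (P : Set X → (Lp ℂ 2 μ →L[ℂ] Lp ℂ 2 μ)) (m : ℝ)
    (A : Lp ℂ 2 μ →L[ℂ] Lp ℂ 2 μ) : Prop :=
  ∀ (a b : X) (r s : ℝ), 0 < r → 0 < s →
    P (ball a r) * A * P (ball b s) ≠ 0 → dist a b ≤ r + s + m

theorem prop_adj (hP : ∀ (S : Set X) (f : Lp ℂ 2 μ), (P S f : X → ℂ) =ᵐ[μ] S.indicator ⇑f)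
    {m : ℝ} {A : Lp ℂ 2 μ →L[ℂ] Lp ℂ 2 μ} (hA : prop P m A) :
    prop P m (ContinuousLinearMap.adjoint A) := by
  intro a b r s hr hs hne
  have key : P (ball b s) * A * P (ball a r) ≠ 0 := by
    intro h0
    apply hne
    have : ContinuousLinearMap.adjoint (P (ball b s) * A * P (ball a r)) =
        P (ball a r) * ContinuousLinearMap.adjoint A * P (ball b s) := by
      simp only [ContinuousLinearMap.mul_def, ContinuousLinearMap.adjoint_comp, Padj hP]
      rfl
    rw [← this, h0, map_zero]
  have := hA b a s r hs hr key
  rw [dist_comm] at this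
  linarith

theorem indicator_ae_zero {g : Lp ℂ 2 μ} {U : Set X}
    (hP : ∀ (S : Set X) (f : Lp ℂ 2 μ), (P S f : X → ℂ) =ᵐ[μ] S.indicator ⇑f)
    (h : P U g = 0) : U.indicator (⇑g) =ᵐ[μ] 0 := by
  have h0 := hP U g
  rw [h] at h0
  filter_upwards [h0.symm, Lp.coeFn_zero (E := ℂ) (p := 2) (μ := μ)] with x h1 h2
  rw [h1, h2]

/-- ball absorption : `B * P(ball b s) = P(ball b (s+m+3)) * B * P(ball b s)` -/
theorem ball_absorb
    (hP : ∀ (S : Set X) (f : Lp ℂ 2 μ), (P S f : X → ℂ) =ᵐ[μ] S.indicator ⇑f)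
    {m : ℝ} {B : Lp ℂ 2 μ →L[ℂ] Lp ℂ 2 μ} (hB : prop P m B)
    (b : X) {s : ℝ} (hs : 0 < s) :
    P (ball b (s + m + 3)) * B * (P (ball b s)) = B * P (ball b s) := by
  obtain ⟨D, Dcount, Ddense⟩ := TopologicalSpace.exists_countable_dense X
  ext f
  rw [ContinuousLinearMap.mul_apply, ContinuousLinearMap.mul_apply,
    ContinuousLinearMap.mul_apply]
  set g : Lp ℂ 2 μ := B (P (ball b s) f) with hg
  -- for far `a ∈ D`, `g` vanishes a.e. on `ball a 1`
  set Dfar : Set X := {a ∈ D | 1 + s + m < dist a b} with hDfar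
  have hvanish : ∀ a ∈ Dfar, (ball a 1).indicator (⇑g) =ᵐ[μ] 0 := by
    intro a ha
    have hop : P (ball a 1) * B * P (ball b s) = 0 := by
      by_contra h0
      have := hB a b 1 s one_pos hs h0
      linarith [ha.2]
    have hap : P (ball a 1) g = 0 := by
      have := congrArg (fun (T : Lp ℂ 2 μ →L[ℂ] Lp ℂ 2 μ) => T f) hop
      simpa [ContinuousLinearMap.mul_apply] using this
    exact indicator_ae_zero hP hap
  have hae : ∀ᵐ x ∂μ, ∀ a ∈ Dfar, (ball a 1).indicator (⇑g) x = 0 := by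
    rw [ae_ball_iff (Dcount.mono (fun a ha => ha.1))]
    exact hvanish
  filter_upwards [hP (ball b (s + m + 3)) g, hae] with x h1 h2
  rw [h1]
  by_cases hx : x ∈ ball b (s + m + 3)
  · rw [Set.indicator_of_mem hx]
  · -- find a dense point near x
    obtain ⟨a, haD, hax⟩ : ∃ a ∈ D, dist x a < 1 := by
      have := Metric.mem_closure_iff.1 (Ddense x)
      exact this 1 one_pos
    have hfar : a ∈ Dfar := by
      refine ⟨haD, ?_⟩
      have hxb : s + m + 3 ≤ dist x b := by
        by_contra h'
        exact hx (by simpa [mem_ball] using lt_of_not_ge h')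
      have := dist_triangle x a b
      linarith [this]
    have := h2 a hfar
    rw [Set.indicator_of_mem (by simpa [mem_ball, dist_comm] using hax)] at this
    rw [Set.indicator_of_notMem hx, this]

/-- If `W` avoids `ball a (r+m+3)` then `P(ball a r) * B * P W = 0`. -/
theorem ball_left_kill
    (hP : ∀ (S : Set X) (f : Lp ℂ 2 μ), (P S f : X → ℂ) =ᵐ[μ] S.indicator ⇑f)
    {m : ℝ} {B : Lp ℂ 2 μ →L[ℂ] Lp ℂ 2 μ} (hB : prop P m B)
    (a : X) {r : ℝ} (hr : 0 < r) {W : Set X} (hW : W ∩ ball a (r + m + 3) = ∅) :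
    P (ball a r) * B * P W = 0 := by
  have hBadj := prop_adj hP hB
  have habs := ball_absorb hP hBadj a hr
  have hadj : ContinuousLinearMap.adjoint (P (ball a r) * B * P W) =
      P W * ContinuousLinearMap.adjoint B * P (ball a r) := by
    simp only [ContinuousLinearMap.mul_def, ContinuousLinearMap.adjoint_comp, Padj hP]
    rfl
  have hzero : P W * ContinuousLinearMap.adjoint B * P (ball a r) = 0 := by
    calc P W * ContinuousLinearMap.adjoint B * P (ball a r)
        = P W * (P (ball a (r + m + 3)) * ContinuousLinearMap.adjoint B * P (ball a r)) := by
          rw [habs, mul_assoc]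
      _ = (P W * P (ball a (r + m + 3))) * (ContinuousLinearMap.adjoint B * P (ball a r)) := by
          rw [mul_assoc (P (ball a (r + m + 3))), ← mul_assoc (P W)]
      _ = P (W ∩ ball a (r + m + 3)) * (ContinuousLinearMap.adjoint B * P (ball a r)) := by
          rw [Pmul hP]
      _ = 0 := by rw [hW, Pempty hP, zero_mul]
  have := congrArg ContinuousLinearMap.adjoint (hadj.trans hzero)
  rwa [ContinuousLinearMap.adjoint_adjoint, map_zero] at this

/-- If `W` avoids `thickening (m+5) U` then `P U * B * P W = 0`. -/
theorem set_kill
    (hP : ∀ (S : Set X) (f : Lp ℂ 2 μ), (P S f : X → ℂ) =ᵐ[μ] S.indicator ⇑f)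
    {m : ℝ} {B : Lp ℂ 2 μ →L[ℂ] Lp ℂ 2 μ} (hB : prop P m B)
    {U W : Set X} (hUW : thickening (m + 5) U ∩ W = ∅) :
    P U * B * P W = 0 := by
  obtain ⟨D, Dcount, Ddense⟩ := TopologicalSpace.exists_countable_dense X
  ext f
  rw [ContinuousLinearMap.mul_apply, ContinuousLinearMap.mul_apply,
    ContinuousLinearMap.zero_apply]
  set g : Lp ℂ 2 μ := B (P W f) with hg
  set Dgood : Set X := {a ∈ D | ball a (1 + m + 3) ∩ W = ∅} with hDgood
  have hvanish : ∀ a ∈ Dgood, (ball a 1).indicator (⇑g) =ᵐ[μ] 0 := by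
    intro a ha
    have hop : P (ball a 1) * B * P W = 0 := ball_left_kill hP hB a one_pos
      (by rw [Set.inter_comm]; exact ha.2)
    have hap : P (ball a 1) g = 0 := by
      have := congrArg (fun (T : Lp ℂ 2 μ →L[ℂ] Lp ℂ 2 μ) => T f) hop
      simpa [ContinuousLinearMap.mul_apply] using this
    exact indicator_ae_zero hP hap
  have hae : ∀ᵐ x ∂μ, ∀ a ∈ Dgood, (ball a 1).indicator (⇑g) x = 0 := by
    rw [ae_ball_iff (Dcount.mono (fun a ha => ha.1))]
    exact hvanish
  have hzero : (P U) g = 0 := by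
    apply Lp.ext
    filter_upwards [hP U g, hae, Lp.coeFn_zero (E := ℂ) (p := 2) (μ := μ)] with x h1 h2 h0
    rw [h1, h0]
    by_cases hx : x ∈ U
    · obtain ⟨a, haD, hax⟩ : ∃ a ∈ D, dist x a < 1 :=
        Metric.mem_closure_iff.1 (Ddense x) 1 one_pos
      have hgood : a ∈ Dgood := by
        refine ⟨haD, ?_⟩
        rw [Set.eq_empty_iff_forall_notMem]
        rintro y ⟨hy1, hy2⟩
        have hythick : y ∈ thickening (m + 5) U := by
          rw [Metric.mem_thickening_iff]
          refine ⟨x, hx, ?_⟩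
          have h3 := dist_triangle y a x
          rw [mem_ball] at hy1
          rw [dist_comm] at hax
          linarith
        have : y ∈ thickening (m + 5) U ∩ W := ⟨hythick, hy2⟩
        rw [hUW] at this
        exact this
      have := h2 a hgood
      rw [Set.indicator_of_mem (by simpa [mem_ball, dist_comm] using hax)] at this
      rw [Set.indicator_of_mem hx, this]
      rfl
    · rw [Set.indicator_of_notMem hx]
      rfl
  rw [hzero]

/-- `P U * B = P U * B * P V` whenever `thickening (m+5) U ⊆ V`. -/
theorem right_absorb
    (hP : ∀ (S : Set X) (f : Lp ℂ 2 μ), (P S f : X → ℂ) =ᵐ[μ] S.indicator ⇑f)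
    {m : ℝ} {B : Lp ℂ 2 μ →L[ℂ] Lp ℂ 2 μ} (hB : prop P m B)
    {U V : Set X} (hUV : thickening (m + 5) U ⊆ V) :
    P U * B = P U * B * P V := by
  have h1 : P U * B * (P V + P Vᶜ) = P U * B := by rw [Pcompl hP, mul_one]
  have h2 : P U * B * P Vᶜ = 0 := by
    apply set_kill hP hB
    rw [Set.eq_empty_iff_forall_notMem]
    rintro y ⟨hy1, hy2⟩
    exact hy2 (hUV hy1)
  rw [mul_add, h2, add_zero] at h1
  exact h1.symm

/-- `B * P U = P V * B * P U` whenever `thickening (m+5) U ⊆ V`. -/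
theorem left_absorb
    (hP : ∀ (S : Set X) (f : Lp ℂ 2 μ), (P S f : X → ℂ) =ᵐ[μ] S.indicator ⇑f)
    {m : ℝ} {B : Lp ℂ 2 μ →L[ℂ] Lp ℂ 2 μ} (hB : prop P m B)
    {U V : Set X} (hUV : thickening (m + 5) U ⊆ V) :
    B * P U = P V * (B * P U) := by
  have h := right_absorb hP (prop_adj hP hB) hUV
  have := congrArg ContinuousLinearMap.adjoint h
  simp only [ContinuousLinearMap.mul_def, ContinuousLinearMap.adjoint_comp, Padj hP,
    ContinuousLinearMap.adjoint_adjoint] at this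
  exact this

theorem prop_mul
    (hP : ∀ (S : Set X) (f : Lp ℂ 2 μ), (P S f : X → ℂ) =ᵐ[μ] S.indicator ⇑f)
    {m₁ m₂ : ℝ} (hm₂ : 0 ≤ m₂) {A B : Lp ℂ 2 μ →L[ℂ] Lp ℂ 2 μ}
    (hA : prop P m₁ A) (hB : prop P m₂ B) : prop P (m₁ + m₂ + 3) (A * B) := by
  intro a b r s hr hs hne
  have habs := ball_absorb hP hB b hs
  have key : P (ball a r) * A * P (ball b (s + m₂ + 3)) ≠ 0 := by
    intro h0
    apply hne
    calc P (ball a r) * (A * B) * P (ball b s)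
        = (P (ball a r) * A) * (B * P (ball b s)) := by noncomm_ring
      _ = (P (ball a r) * A) * (P (ball b (s + m₂ + 3)) * B * P (ball b s)) := by rw [habs]
      _ = (P (ball a r) * A * P (ball b (s + m₂ + 3))) * (B * P (ball b s)) := by noncomm_ring
      _ = 0 := by rw [h0, zero_mul]
  have := hA a b r (s + m₂ + 3) hr (by linarith) key
  linarith

theorem prop_add {m₁ m₂ : ℝ} {A B : Lp ℂ 2 μ →L[ℂ] Lp ℂ 2 μ}
    (hA : prop P m₁ A) (hB : prop P m₂ B) : prop P (max m₁ m₂) (A + B) := by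
  intro a b r s hr hs hne
  have : P (ball a r) * A * P (ball b s) ≠ 0 ∨ P (ball a r) * B * P (ball b s) ≠ 0 := by
    by_contra h
    push_neg at h
    apply hne
    rw [mul_add, add_mul, h.1, h.2, add_zero]
  rcases this with h | h
  · exact le_trans (hA a b r s hr hs h) (by simp [le_max_left, add_le_add_iff_left])
  · exact le_trans (hB a b r s hr hs h) (by simp [le_max_right, add_le_add_iff_left])

theorem prop_neg {m : ℝ} {A : Lp ℂ 2 μ →L[ℂ] Lp ℂ 2 μ}
    (hA : prop P m A) : prop P m (-A) := by
  intro a b r s hr hs hne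
  refine hA a b r s hr hs (fun h0 => hne ?_)
  rw [mul_neg, neg_mul, h0, neg_zero]

theorem prop_smul {m : ℝ} {c : ℂ} {A : Lp ℂ 2 μ →L[ℂ] Lp ℂ 2 μ}
    (hA : prop P m A) : prop P m (c • A) := by
  intro a b r s hr hs hne
  refine hA a b r s hr hs (fun h0 => hne ?_)
  rw [mul_smul_comm, smul_mul_assoc, h0, smul_zero]

theorem prop_smul_one
    (hP : ∀ (S : Set X) (f : Lp ℂ 2 μ), (P S f : X → ℂ) =ᵐ[μ] S.indicator ⇑f)
    (c : ℂ) : prop P 0 (c • (1 : Lp ℂ 2 μ →L[ℂ] Lp ℂ 2 μ)) := by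
  intro a b r s hr hs hne
  have hmul : P (ball a r) * (c • (1 : Lp ℂ 2 μ →L[ℂ] Lp ℂ 2 μ)) * P (ball b s)
      = c • P (ball a r ∩ ball b s) := by
    rw [mul_smul_comm, smul_mul_assoc]
    congr 1
    rw [mul_one, Pmul hP]
  have hne' : ball a r ∩ ball b s ≠ ∅ := by
    intro h0
    apply hne
    rw [hmul, h0, Pempty hP, smul_zero]
  obtain ⟨x, hx1, hx2⟩ := Set.nonempty_iff_ne_empty.2 hne'
  rw [mem_ball] at hx1 hx2
  have := dist_triangle a x b
  rw [dist_comm a x] at this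
  linarith

theorem prop_one
    (hP : ∀ (S : Set X) (f : Lp ℂ 2 μ), (P S f : X → ℂ) =ᵐ[μ] S.indicator ⇑f) :
    prop P 0 (1 : Lp ℂ 2 μ →L[ℂ] Lp ℂ 2 μ) := by
  have := prop_smul_one hP (1 : ℂ)
  rwa [one_smul] at this

theorem prop_conj
    (hP : ∀ (S : Set X) (f : Lp ℂ 2 μ), (P S f : X → ℂ) =ᵐ[μ] S.indicator ⇑f)
    {m : ℝ} {A : Lp ℂ 2 μ →L[ℂ] Lp ℂ 2 μ} (hA : prop P m A) (U V : Set X) :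
    prop P m (P U * A * P V) := by
  intro a b r s hr hs hne
  refine hA a b r s hr hs (fun h0 => hne ?_)
  have e1 : P (ball a r) * P U = P U * P (ball a r) := by
    rw [Pmul hP, Pmul hP, Set.inter_comm]
  have e2 : P V * P (ball b s) = P (ball b s) * P V := by
    rw [Pmul hP, Pmul hP, Set.inter_comm]
  calc P (ball a r) * (P U * A * P V) * P (ball b s)
      = (P (ball a r) * P U) * A * (P V * P (ball b s)) := by noncomm_ring
    _ = (P U * P (ball a r)) * A * (P (ball b s) * P V) := by rw [e1, e2]
    _ = P U * (P (ball a r) * A * P (ball b s)) * P V := by noncomm_ring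
    _ = 0 := by rw [h0, mul_zero, zero_mul]

theorem sandwich_of_expr
    (hP : ∀ (S : Set X) (f : Lp ℂ 2 μ), (P S f : X → ℂ) =ᵐ[μ] S.indicator ⇑f)
    {A B : Lp ℂ 2 μ →L[ℂ] Lp ℂ 2 μ} {W : Set X} (h : A = P W * B * P W) :
    A = P W * A * P W := by
  calc A = P W * B * P W := h
    _ = (P W * P W) * B * (P W * P W) := by rw [Pmul hP, Set.inter_self]
    _ = P W * (P W * B * P W) * P W := by noncomm_ring
    _ = P W * A * P W := by rw [← h]

theorem sandwich_up
    (hP : ∀ (S : Set X) (f : Lp ℂ 2 μ), (P S f : X → ℂ) =ᵐ[μ] S.indicator ⇑f)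
    {A : Lp ℂ 2 μ →L[ℂ] Lp ℂ 2 μ} {U V : Set X} (h : A = P U * A * P U) (hUV : U ⊆ V) :
    A = P V * A * P V := by
  calc A = P U * A * P U := h
    _ = (P V * P U) * A * (P U * P V) := by rw [Pabsorb_left hP hUV, Pabsorb_right hP hUV]
    _ = P V * (P U * A * P U) * P V := by noncomm_ring
    _ = P V * A * P V := by rw [← h]

theorem sandwich_mulP_right
    (hP : ∀ (S : Set X) (f : Lp ℂ 2 μ), (P S f : X → ℂ) =ᵐ[μ] S.indicator ⇑f)
    {A : Lp ℂ 2 μ →L[ℂ] Lp ℂ 2 μ} {U V : Set X} (h : A = P U * A * P U) (hUV : U ⊆ V) :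
    A * P V = A := by
  have h2 := sandwich_up hP h hUV
  calc A * P V = (P V * A * P V) * P V := by rw [← h2]
    _ = P V * A * (P V * P V) := by noncomm_ring
    _ = P V * A * P V := by rw [Pmul hP, Set.inter_self]
    _ = A := h2.symm

theorem sandwich_mulP_left
    (hP : ∀ (S : Set X) (f : Lp ℂ 2 μ), (P S f : X → ℂ) =ᵐ[μ] S.indicator ⇑f)
    {A : Lp ℂ 2 μ →L[ℂ] Lp ℂ 2 μ} {U V : Set X} (h : A = P U * A * P U) (hUV : U ⊆ V) :
    P V * A = A := by
  have h2 := sandwich_up hP h hUV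
  calc P V * A = P V * (P V * A * P V) := by rw [← h2]
    _ = (P V * P V) * A * P V := by noncomm_ring
    _ = P V * A * P V := by rw [Pmul hP, Set.inter_self]
    _ = A := h2.symm

end Stmt15Aux
end Stmt15AuxSection

set_option maxHeartbeats 1000000
set_option synthInstance.maxHeartbeats 400000

/-- In the standard C*-algebra `𝒜std` of finite-propagation operators on
`L²(X, μ)`, each nonempty open set `S` with `S(n) ≠ X` for all `n` determines a closed
ideal `J_S`, the norm closure of `{A ∈ 𝒜std : ∃ n, A = P(S(n)) A P(S(n))}`, where
`S(n) = thickening n S`.  If `S, T` are asymptotically independent (for all `n ≥ 1` there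
is `m ≥ 1` with `S(n) ∩ T(n) ⊆ (S ∩ T)(m)`), then `J_{S∩T} = J_S ∩ J_T` and, for the
quotient spectra `σ_S(A)` (defined by non-invertibility modulo the ideal),
`σ_{S∩T}(A) = σ_S(A) ∪ σ_T(A)` for every `A ∈ 𝒜std`. -/
theorem stmt15 {X : Type*} [MetricSpace X] [TopologicalSpace.SeparableSpace X]
    [ProperSpace X] [MeasurableSpace X] [BorelSpace X]
    (μ : Measure X)
    (hball : ∀ (a : X) (r : ℝ), 0 < r → 0 < μ (ball a r) ∧ μ (ball a r) < ⊤)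
    (P : Set X → (Lp ℂ 2 μ →L[ℂ] Lp ℂ 2 μ))
    (hP : ∀ (S : Set X) (f : Lp ℂ 2 μ), (P S f : X → ℂ) =ᵐ[μ] S.indicator ⇑f)
    (𝒜 : ℝ → Set (Lp ℂ 2 μ →L[ℂ] Lp ℂ 2 μ))
    (h𝒜 : ∀ m : ℝ, 𝒜 m = {A | ∀ (a b : X) (r s : ℝ), 0 < r → 0 < s →
      P (ball a r) * A * P (ball b s) ≠ 0 → dist a b ≤ r + s + m})
    (𝒜std : Set (Lp ℂ 2 μ →L[ℂ] Lp ℂ 2 μ))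
    (hstd : 𝒜std = closure (⋃ m : ℕ, 𝒜 (m : ℝ)))
    (J : Set X → Set (Lp ℂ 2 μ →L[ℂ] Lp ℂ 2 μ))
    (hJ : ∀ S : Set X, J S = closure {A | A ∈ 𝒜std ∧
      ∃ n : ℕ, A = P (thickening (n : ℝ) S) * A * P (thickening (n : ℝ) S)})
    (σ : Set X → (Lp ℂ 2 μ →L[ℂ] Lp ℂ 2 μ) → Set ℂ)
    (hσ : ∀ (S : Set X) (A : Lp ℂ 2 μ →L[ℂ] Lp ℂ 2 μ),
      σ S A = {z : ℂ | ¬ ∃ Y ∈ 𝒜std,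
        Y * (z • (1 : Lp ℂ 2 μ →L[ℂ] Lp ℂ 2 μ) - A) - 1 ∈ J S ∧
        (z • (1 : Lp ℂ 2 μ →L[ℂ] Lp ℂ 2 μ) - A) * Y - 1 ∈ J S})
    (S T : Set X)
    (hS : S.Nonempty ∧ IsOpen S ∧ ∀ n : ℕ, thickening (n : ℝ) S ≠ Set.univ)
    (hT : T.Nonempty ∧ IsOpen T ∧ ∀ n : ℕ, thickening (n : ℝ) T ≠ Set.univ)
    (hindep : ∀ n : ℕ, 1 ≤ n → ∃ m : ℕ, 1 ≤ m ∧
      thickening (n : ℝ) S ∩ thickening (n : ℝ) T ⊆ thickening (m : ℝ) (S ∩ T)) :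
    J (S ∩ T) = J S ∩ J T ∧
      ∀ A ∈ 𝒜std, σ (S ∩ T) A = σ S A ∪ σ T A := by
  classical
  have hmem𝒜 : ∀ (m : ℝ) (A : Lp ℂ 2 μ →L[ℂ] Lp ℂ 2 μ), A ∈ 𝒜 m ↔ Stmt15Aux.prop P m A := by
    intro m A; rw [h𝒜]; exact Iff.rfl
  have hUmem : ∀ (m : ℕ) (A : Lp ℂ 2 μ →L[ℂ] Lp ℂ 2 μ),
      Stmt15Aux.prop P (m : ℝ) A → A ∈ 𝒜std := by
    intro m A h
    rw [hstd]
    exact subset_closure (Set.mem_iUnion.2 ⟨m, (hmem𝒜 _ _).2 h⟩)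
  have hseq : ∀ {A}, A ∈ 𝒜std → ∃ u : ℕ → (Lp ℂ 2 μ →L[ℂ] Lp ℂ 2 μ),
      (∀ k, ∃ m : ℕ, Stmt15Aux.prop P (m : ℝ) (u k)) ∧
        Filter.Tendsto u Filter.atTop (nhds A) := by
    intro A hA
    rw [hstd] at hA
    obtain ⟨u, hu, hlim⟩ := mem_closure_iff_seq_limit.1 hA
    refine ⟨u, fun k => ?_, hlim⟩
    obtain ⟨m, hm⟩ := Set.mem_iUnion.1 (hu k)
    exact ⟨m, (hmem𝒜 _ _).1 hm⟩
  have hmul_std : ∀ {A B}, A ∈ 𝒜std → B ∈ 𝒜std → A * B ∈ 𝒜std := by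
    intro A B hA hB
    obtain ⟨u, hu, hul⟩ := hseq hA
    obtain ⟨v, hv, hvl⟩ := hseq hB
    rw [hstd]
    refine mem_closure_of_tendsto (hul.mul hvl) (Filter.Eventually.of_forall fun k => ?_)
    obtain ⟨m1, h1⟩ := hu k
    obtain ⟨m2, h2⟩ := hv k
    refine Set.mem_iUnion.2 ⟨m1 + m2 + 3, (hmem𝒜 _ _).2 ?_⟩
    have hcast : ((m1 + m2 + 3 : ℕ) : ℝ) = (m1 : ℝ) + (m2 : ℝ) + 3 := by push_cast; ring
    rw [hcast]
    exact Stmt15Aux.prop_mul hP (by positivity) h1 h2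
  have hadd_std : ∀ {A B}, A ∈ 𝒜std → B ∈ 𝒜std → A + B ∈ 𝒜std := by
    intro A B hA hB
    obtain ⟨u, hu, hul⟩ := hseq hA
    obtain ⟨v, hv, hvl⟩ := hseq hB
    rw [hstd]
    refine mem_closure_of_tendsto (hul.add hvl) (Filter.Eventually.of_forall fun k => ?_)
    obtain ⟨m1, h1⟩ := hu k
    obtain ⟨m2, h2⟩ := hv k
    refine Set.mem_iUnion.2 ⟨max m1 m2, (hmem𝒜 _ _).2 ?_⟩
    have hcast : ((max m1 m2 : ℕ) : ℝ) = max (m1 : ℝ) (m2 : ℝ) := by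
      simp [Nat.cast_max]
    rw [hcast]
    exact Stmt15Aux.prop_add h1 h2
  have hneg_std : ∀ {A}, A ∈ 𝒜std → -A ∈ 𝒜std := by
    intro A hA
    obtain ⟨u, hu, hul⟩ := hseq hA
    rw [hstd]
    refine mem_closure_of_tendsto hul.neg (Filter.Eventually.of_forall fun k => ?_)
    obtain ⟨m1, h1⟩ := hu k
    exact Set.mem_iUnion.2 ⟨m1, (hmem𝒜 _ _).2 (Stmt15Aux.prop_neg h1)⟩
  have hsub_std : ∀ {A B}, A ∈ 𝒜std → B ∈ 𝒜std → A - B ∈ 𝒜std := by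
    intro A B hA hB
    rw [sub_eq_add_neg]
    exact hadd_std hA (hneg_std hB)
  have hsmul1_std : ∀ z : ℂ, z • (1 : Lp ℂ 2 μ →L[ℂ] Lp ℂ 2 μ) ∈ 𝒜std := by
    intro z
    refine hUmem 0 _ ?_
    rw [Nat.cast_zero]
    exact Stmt15Aux.prop_smul_one hP z
  have hone_std : (1 : Lp ℂ 2 μ →L[ℂ] Lp ℂ 2 μ) ∈ 𝒜std := by
    have := hsmul1_std 1
    rwa [one_smul] at this
  have hconj_std : ∀ (U V : Set X) {A}, A ∈ 𝒜std → P U * A * P V ∈ 𝒜std := by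
    intro U V A hA
    obtain ⟨u, hu, hul⟩ := hseq hA
    rw [hstd]
    refine mem_closure_of_tendsto ((tendsto_const_nhds.mul hul).mul tendsto_const_nhds)
      (Filter.Eventually.of_forall fun k => ?_)
    obtain ⟨m1, h1⟩ := hu k
    exact Set.mem_iUnion.2 ⟨m1, (hmem𝒜 _ _).2 (Stmt15Aux.prop_conj hP h1 U V)⟩
  -- the defining (pre-closure) sets of the ideals
  have KabsorbR : ∀ (W : Set X) (x y : Lp ℂ 2 μ →L[ℂ] Lp ℂ 2 μ),
      x ∈ {A | A ∈ 𝒜std ∧ ∃ n : ℕ,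
        A = P (thickening (n : ℝ) W) * A * P (thickening (n : ℝ) W)} →
      (∃ m : ℕ, Stmt15Aux.prop P (m : ℝ) y) →
      x * y ∈ {A | A ∈ 𝒜std ∧ ∃ n : ℕ,
        A = P (thickening (n : ℝ) W) * A * P (thickening (n : ℝ) W)} := by
    rintro W x y ⟨hxstd, n, hx⟩ ⟨m, hy⟩
    refine ⟨hmul_std hxstd (hUmem m y hy), n + m + 6, ?_⟩
    set U := thickening (n : ℝ) W with hU
    set V := thickening ((n + m + 6 : ℕ) : ℝ) W with hV
    have hUV : U ⊆ V := thickening_mono (by push_cast; linarith) W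
    have habs : P U * y = P U * y * P V := by
      refine Stmt15Aux.right_absorb hP hy ?_
      refine subset_trans (thickening_thickening_subset _ _ _) (thickening_mono ?_ W)
      push_cast; linarith
    have hxU : x * P U = x := Stmt15Aux.sandwich_mulP_right hP hx (subset_refl U)
    have hUx : P V * x = x := Stmt15Aux.sandwich_mulP_left hP hx hUV
    have h1 : x * y = (x * y) * P V := by
      calc x * y = (x * P U) * y := by rw [hxU]
        _ = x * (P U * y) := by rw [mul_assoc]
        _ = x * (P U * y * P V) := by rw [← habs]
        _ = ((x * P U) * y) * P V := by noncomm_ring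
        _ = (x * y) * P V := by rw [hxU]
    have h2 : P V * (x * y) = x * y := by rw [← mul_assoc, hUx]
    calc x * y = (x * y) * P V := h1
      _ = (P V * (x * y)) * P V := by rw [h2]
      _ = P V * (x * y) * P V := by rw [← mul_assoc]
  have KabsorbL : ∀ (W : Set X) (x y : Lp ℂ 2 μ →L[ℂ] Lp ℂ 2 μ),
      x ∈ {A | A ∈ 𝒜std ∧ ∃ n : ℕ,
        A = P (thickening (n : ℝ) W) * A * P (thickening (n : ℝ) W)} →
      (∃ m : ℕ, Stmt15Aux.prop P (m : ℝ) y) →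
      y * x ∈ {A | A ∈ 𝒜std ∧ ∃ n : ℕ,
        A = P (thickening (n : ℝ) W) * A * P (thickening (n : ℝ) W)} := by
    rintro W x y ⟨hxstd, n, hx⟩ ⟨m, hy⟩
    refine ⟨hmul_std (hUmem m y hy) hxstd, n + m + 6, ?_⟩
    set U := thickening (n : ℝ) W with hU
    set V := thickening ((n + m + 6 : ℕ) : ℝ) W with hV
    have hUV : U ⊆ V := thickening_mono (by push_cast; linarith) W
    have habs : y * P U = P V * (y * P U) := by
      refine Stmt15Aux.left_absorb hP hy ?_
      refine subset_trans (thickening_thickening_subset _ _ _) (thickening_mono ?_ W)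
      push_cast; linarith
    have hxU : P U * x = x := Stmt15Aux.sandwich_mulP_left hP hx (subset_refl U)
    have hUx : x * P V = x := Stmt15Aux.sandwich_mulP_right hP hx hUV
    have h1 : y * x = P V * (y * x) := by
      calc y * x = y * (P U * x) := by rw [hxU]
        _ = (y * P U) * x := by rw [mul_assoc]
        _ = (P V * (y * P U)) * x := by rw [← habs]
        _ = P V * (y * (P U * x)) := by noncomm_ring
        _ = P V * (y * x) := by rw [hxU]
    have h2 : (y * x) * P V = y * x := by rw [mul_assoc, hUx]
    calc y * x = P V * (y * x) := h1
      _ = P V * ((y * x) * P V) := by rw [h2]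
      _ = P V * (y * x) * P V := by rw [← mul_assoc]
  have JabsorbR : ∀ (W : Set X) {x y : Lp ℂ 2 μ →L[ℂ] Lp ℂ 2 μ},
      x ∈ J W → y ∈ 𝒜std → x * y ∈ J W := by
    intro W x y hx hy
    rw [hJ] at hx ⊢
    obtain ⟨u, hu, hul⟩ := mem_closure_iff_seq_limit.1 hx
    obtain ⟨v, hv, hvl⟩ := hseq hy
    exact mem_closure_of_tendsto (hul.mul hvl)
      (Filter.Eventually.of_forall fun k => KabsorbR W (u k) (v k) (hu k) (hv k))
  have JabsorbL : ∀ (W : Set X) {x y : Lp ℂ 2 μ →L[ℂ] Lp ℂ 2 μ},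
      x ∈ J W → y ∈ 𝒜std → y * x ∈ J W := by
    intro W x y hx hy
    rw [hJ] at hx ⊢
    obtain ⟨u, hu, hul⟩ := mem_closure_iff_seq_limit.1 hx
    obtain ⟨v, hv, hvl⟩ := hseq hy
    exact mem_closure_of_tendsto (hvl.mul hul)
      (Filter.Eventually.of_forall fun k => KabsorbL W (u k) (v k) (hu k) (hv k))
  have Jneg : ∀ (W : Set X) {x : Lp ℂ 2 μ →L[ℂ] Lp ℂ 2 μ}, x ∈ J W → -x ∈ J W := by
    intro W x hx
    have := JabsorbR W hx (hneg_std hone_std)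
    rwa [mul_neg_one] at this
  -- part 1
  have subset1 : J (S ∩ T) ⊆ J S ∩ J T := by
    refine Set.subset_inter ?_ ?_ <;> rw [hJ, hJ] <;>
      refine closure_mono ?_ <;> rintro A ⟨hA, n, hn⟩
    · exact ⟨hA, n, Stmt15Aux.sandwich_up hP hn
        (thickening_subset_of_subset _ Set.inter_subset_left)⟩
    · exact ⟨hA, n, Stmt15Aux.sandwich_up hP hn
        (thickening_subset_of_subset _ Set.inter_subset_right)⟩
  have subset2 : J S ∩ J T ⊆ J (S ∩ T) := by
    rintro A ⟨hAS, hAT⟩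
    rw [hJ] at hAS hAT ⊢
    rw [Metric.mem_closure_iff] at hAS hAT ⊢
    intro ε hε
    obtain ⟨B, hBK, hABd⟩ := hAS (ε/3) (by linarith)
    obtain ⟨C, hCK, hACd⟩ := hAT (ε/3) (by linarith)
    obtain ⟨hBstd, n, hBn⟩ := hBK
    obtain ⟨hCstd, k, hCk⟩ := hCK
    set N : ℕ := max n k + 1 with hN
    set SN := thickening (N : ℝ) S with hSN
    set TN := thickening (N : ℝ) T with hTN
    have hnN : (n : ℝ) ≤ (N : ℝ) := Nat.cast_le.2 (le_trans (le_max_left n k) (Nat.le_succ _))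
    have hkN : (k : ℝ) ≤ (N : ℝ) := Nat.cast_le.2 (le_trans (le_max_right n k) (Nat.le_succ _))
    have hBN : B = P SN * B * P SN :=
      Stmt15Aux.sandwich_up hP hBn (thickening_mono hnN S)
    have hCN : C = P TN * C * P TN :=
      Stmt15Aux.sandwich_up hP hCk (thickening_mono hkN T)
    obtain ⟨m', hm'1, hm'sub⟩ := hindep N (Nat.le_add_left 1 _)
    refine ⟨P TN * B * P TN, ⟨hconj_std TN TN hBstd, m', ?_⟩, ?_⟩
    · have hexpr : P TN * B * P TN = P (SN ∩ TN) * B * P (SN ∩ TN) := by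
        calc P TN * B * P TN = P TN * (P SN * B * P SN) * P TN := by rw [← hBN]
          _ = (P TN * P SN) * B * (P SN * P TN) := by simp only [mul_assoc]
          _ = P (SN ∩ TN) * B * P (SN ∩ TN) := by
              rw [Stmt15Aux.Pmul hP, Stmt15Aux.Pmul hP, Set.inter_comm TN SN]
      have h1 : P TN * B * P TN = P (SN ∩ TN) * (P TN * B * P TN) * P (SN ∩ TN) :=
        Stmt15Aux.sandwich_of_expr hP hexpr
      exact Stmt15Aux.sandwich_up hP h1 hm'sub
    · have hCD : C - P TN * B * P TN = P TN * (C - B) * P TN := by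
        rw [mul_sub, sub_mul, ← hCN]
      have hnorm : ‖C - P TN * B * P TN‖ ≤ ‖C - B‖ := by
        rw [hCD]
        have h1 := norm_mul_le (P TN * (C - B)) (P TN)
        have h2 := norm_mul_le (P TN) (C - B)
        have hp := Stmt15Aux.Pnorm hP TN
        have h3 := norm_nonneg (C - B)
        have h4 := norm_nonneg (P TN)
        have h5 := norm_nonneg (P TN * (C - B))
        nlinarith
      have hCB : ‖C - B‖ ≤ dist A C + dist A B := by
        rw [← dist_eq_norm]
        calc dist C B ≤ dist C A + dist A B := dist_triangle C A B
          _ = dist A C + dist A B := by rw [dist_comm C A]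
      have htri : dist A (P TN * B * P TN) ≤ dist A C + ‖C - B‖ := by
        refine le_trans (dist_triangle A C _) ?_
        have : dist C (P TN * B * P TN) = ‖C - P TN * B * P TN‖ := dist_eq_norm _ _
        rw [this]
        linarith
      linarith
  have hpart1 : J (S ∩ T) = J S ∩ J T := Set.Subset.antisymm subset1 subset2
  refine ⟨hpart1, ?_⟩
  -- part 2
  intro A hA
  ext z
  simp only [hσ, Set.mem_union, Set.mem_setOf_eq]
  have hc : (z • (1 : Lp ℂ 2 μ →L[ℂ] Lp ℂ 2 μ) - A) ∈ 𝒜std := hsub_std (hsmul1_std z) hA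
  set c := z • (1 : Lp ℂ 2 μ →L[ℂ] Lp ℂ 2 μ) - A with hcdef
  have hEx : (∃ Y ∈ 𝒜std, Y * c - 1 ∈ J (S ∩ T) ∧ c * Y - 1 ∈ J (S ∩ T)) ↔
      ((∃ Y ∈ 𝒜std, Y * c - 1 ∈ J S ∧ c * Y - 1 ∈ J S) ∧
       (∃ Y ∈ 𝒜std, Y * c - 1 ∈ J T ∧ c * Y - 1 ∈ J T)) := by
    constructor
    · rintro ⟨Y, hY, h1, h2⟩
      rw [hpart1] at h1 h2
      exact ⟨⟨Y, hY, h1.1, h2.1⟩, ⟨Y, hY, h1.2, h2.2⟩⟩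
    · rintro ⟨⟨Y, hY, hY1, hY2⟩, ⟨Z, hZ, hZ1, hZ2⟩⟩
      have hYc1 : Y * c - 1 ∈ 𝒜std := hsub_std (hmul_std hY hc) hone_std
      have hZc1 : Z * c - 1 ∈ 𝒜std := hsub_std (hmul_std hZ hc) hone_std
      have hcY1 : c * Y - 1 ∈ 𝒜std := hsub_std (hmul_std hc hY) hone_std
      have hcZ1 : c * Z - 1 ∈ 𝒜std := hsub_std (hmul_std hc hZ) hone_std
      refine ⟨Y + Z - Y * c * Z,
        hsub_std (hadd_std hY hZ) (hmul_std (hmul_std hY hc) hZ), ?_, ?_⟩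
      · have key : (Y + Z - Y * c * Z) * c - 1 = -((Y * c - 1) * (Z * c - 1)) := by
          noncomm_ring
        rw [key, hpart1]
        exact ⟨Jneg S (JabsorbR S hY1 hZc1), Jneg T (JabsorbL T hZ1 hYc1)⟩
      · have key : c * (Y + Z - Y * c * Z) - 1 = -((c * Y - 1) * (c * Z - 1)) := by
          noncomm_ring
        rw [key, hpart1]
        exact ⟨Jneg S (JabsorbR S hY2 hcZ1), Jneg T (JabsorbL T hZ2 hcY1)⟩
  rw [not_iff_not.2 hEx, not_and_or]
end

section
/- Let r : U → A be a pseudo-resolvent on a unital associative algebra, fix α ∈ U, and let Ũ = {z ∈ C : 1 + (z − α) r_α is invertible}. Then U ⊆ Ũ, the formula r̃_z = r_α (1 + (z − α) r_α)^{-1} extends r to a pseudo-resolvent on Ũ, and this extension is maximal: any pseudo-resolvent extending r̃ has domain Ũ. Moreover Ũ does not depend on the choice of α ∈ U. -/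
private lemma keyid17 {A : Type*} [Ring A] [Algebra ℂ A] (x y : A) (b g w : ℂ)
    (h : (g - b) • (y * x) = x - y) :
    (1 + (w - g) • y) * (1 + (g - b) • x) = 1 + (w - b) • x := by
  have expand : (1 + (w - g) • y) * (1 + (g - b) • x)
      = 1 + (g - b) • x + (w - g) • y + (w - g) • ((g - b) • (y * x)) := by
    simp only [mul_add, add_mul, one_mul, mul_one, smul_mul_assoc, mul_smul_comm]
    module
  rw [expand, h]
  module

/-- Let `r : U → A` be a pseudo-resolvent on a unital associative algebra,
`α ∈ U`, and `Ut = {z : 1 + (z - α) • r α is invertible}`.  Then `U ⊆ Ut`; there is an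
extension `rt` of `r` to `Ut` satisfying `rt z * (1 + (z - α) • r α) = r α`
(i.e. `rt z = r α (1 + (z - α) r α)⁻¹`) which is again a pseudo-resolvent; this extension
is maximal, in the sense that any pseudo-resolvent on a set `V ⊇ Ut` extending `rt` has
`V = Ut`; and `Ut` does not depend on the choice of `α ∈ U`. -/
theorem stmt17 {A : Type*} [Ring A] [Algebra ℂ A]
    (U : Set ℂ) (hU : U.Nonempty) (r : ℂ → A)
    (hr : ∀ α ∈ U, ∀ γ ∈ U, r α - r γ = (γ - α) • (r α * r γ))
    (α : ℂ) (hα : α ∈ U)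
    (Ut : Set ℂ) (hUt : Ut = {z : ℂ | IsUnit (1 + (z - α) • r α)}) :
    U ⊆ Ut ∧
    (∃ rt : ℂ → A,
      (∀ z ∈ U, rt z = r z) ∧
      (∀ z ∈ Ut, rt z * (1 + (z - α) • r α) = r α ∧ (1 + (z - α) • r α) * rt z = r α) ∧
      (∀ z ∈ Ut, ∀ w ∈ Ut, rt z - rt w = (w - z) • (rt z * rt w)) ∧
      -- maximality: any pseudo-resolvent extension of `rt` has domain `Ut`
      (∀ (V : Set ℂ) (r' : ℂ → A), Ut ⊆ V → (∀ z ∈ Ut, r' z = rt z) →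
        (∀ z ∈ V, ∀ w ∈ V, r' z - r' w = (w - z) • (r' z * r' w)) → V = Ut)) ∧
    -- independence of the choice of `α`
    (∀ β ∈ U, {z : ℂ | IsUnit (1 + (z - β) • r β)} = Ut) := by
  subst hUt
  have hneg : ∀ (p q m : A) (c d : ℂ), p - q = c • m → d = -c → q - p = d • m := by
    intro p q m c d h hd
    rw [hd, neg_smul, ← h, neg_sub]
  -- U ⊆ Ut
  have hsub : U ⊆ {z : ℂ | IsUnit (1 + (z - α) • r α)} := by
    intro z hz
    have h1 : (α - z) • (r α * r z) = r z - r α :=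
      (hneg _ _ _ _ _ (hr α hα z hz) (by ring)).symm
    have h2 : (z - α) • (r z * r α) = r α - r z :=
      (hneg _ _ _ _ _ (hr z hz α hα) (by ring)).symm
    have e1 := keyid17 (r z) (r α) z α z h1
    have e2 := keyid17 (r α) (r z) α z α h2
    simp only [sub_self, zero_smul, add_zero] at e1 e2
    exact ⟨⟨_, _, e1, e2⟩, rfl⟩
  refine ⟨hsub, ⟨fun z => r α * Ring.inverse (1 + (z - α) • r α), ?_, ?_, ?_, ?_⟩, ?_⟩
  · -- extends r
    intro z hz
    have hu : IsUnit (1 + (z - α) • r α) := hsub hz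
    have hcomm : Commute (r α) (1 + (z - α) • r α) :=
      (Commute.one_right _).add_right ((Commute.refl _).smul_right _)
    have cinv : Commute (r α) (Ring.inverse (1 + (z - α) • r α)) := by
      obtain ⟨v, hv⟩ := hu
      rw [← hv, Ring.inverse_unit]
      exact (hv ▸ hcomm : Commute (r α) (v : A)).units_inv_right
    show r α * Ring.inverse (1 + (z - α) • r α) = r z
    have h3 : (1 + (z - α) • r α) * r z = r α := by
      have : (1 + (z - α) • r α) * r z = r z + (z - α) • (r α * r z) := by
        rw [add_mul, one_mul, smul_mul_assoc]
      rw [this, ← hr α hα z hz]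
      abel
    have h4 : Ring.inverse (1 + (z - α) • r α) * ((1 + (z - α) • r α) * r z)
        = Ring.inverse (1 + (z - α) • r α) * r α := by rw [h3]
    rw [← mul_assoc, Ring.inverse_mul_cancel _ hu, one_mul] at h4
    rw [cinv.eq, h4]
  · -- inverse identities
    intro z hz
    have hu : IsUnit (1 + (z - α) • r α) := hz
    have hcomm : Commute (r α) (1 + (z - α) • r α) :=
      (Commute.one_right _).add_right ((Commute.refl _).smul_right _)
    constructor
    · rw [mul_assoc, Ring.inverse_mul_cancel _ hu, mul_one]
    · rw [← mul_assoc, ← hcomm.eq, mul_assoc, Ring.mul_inverse_cancel _ hu, mul_one]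
  · -- pseudo-resolvent identity
    intro z hz w hw
    have huz : IsUnit (1 + (z - α) • r α) := hz
    have huw : IsUnit (1 + (w - α) • r α) := hw
    set iz := Ring.inverse (1 + (z - α) • r α) with hiz
    set iw := Ring.inverse (1 + (w - α) • r α) with hiw
    have hdiff : (1 + (w - α) • r α) - (1 + (z - α) • r α) = (w - z) • r α := by
      module
    have key : iz - iw = iz * ((w - z) • r α) * iw := by
      calc iz - iw = iz * ((1 + (w - α) • r α) * iw) - (iz * (1 + (z - α) • r α)) * iw := by
            rw [Ring.mul_inverse_cancel _ huw, Ring.inverse_mul_cancel _ huz, mul_one, one_mul]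
        _ = iz * (1 + (w - α) • r α) * iw - iz * (1 + (z - α) • r α) * iw := by
            rw [← mul_assoc]
        _ = iz * ((1 + (w - α) • r α) - (1 + (z - α) • r α)) * iw := by
            rw [mul_sub, sub_mul]
        _ = iz * ((w - z) • r α) * iw := by rw [hdiff]
    calc r α * iz - r α * iw = r α * (iz - iw) := (mul_sub _ _ _).symm
      _ = r α * (iz * ((w - z) • r α) * iw) := by rw [key]
      _ = (w - z) • (r α * iz * (r α * iw)) := by
          simp only [smul_mul_assoc, mul_smul_comm, mul_assoc]
  · -- maximality
    intro V r' hVs hext hres'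
    have hαt : α ∈ {z : ℂ | IsUnit (1 + (z - α) • r α)} := hsub hα
    have hr'α : r' α = r α := by
      rw [hext α hαt]
      simp [sub_self, zero_smul, add_zero, Ring.inverse_one]
    refine Set.Subset.antisymm (fun z hz => ?_) hVs
    have h1 : (α - z) • (r α * r' z) = r' z - r α := by
      have h := hres' α (hVs hαt) z hz
      rw [hr'α] at h
      exact (hneg _ _ _ _ _ h (by ring)).symm
    have h2 : (z - α) • (r' z * r α) = r α - r' z := by
      have h := hres' z hz α (hVs hαt)
      rw [hr'α] at h
      exact (hneg _ _ _ _ _ h (by ring)).symm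
    have e1 := keyid17 (r' z) (r α) z α z h1
    have e2 := keyid17 (r α) (r' z) α z α h2
    simp only [sub_self, zero_smul, add_zero] at e1 e2
    exact ⟨⟨_, _, e1, e2⟩, rfl⟩
  · -- independence of α
    intro β hβ
    ext z
    simp only [Set.mem_setOf_eq]
    have hb : (β - α) • (r β * r α) = r α - r β :=
      (hneg _ _ _ _ _ (hr β hβ α hα) (by ring)).symm
    have key := keyid17 (r α) (r β) α β z hb
    obtain ⟨v, hv⟩ := hsub hβ
    rw [← hv] at key
    constructor
    · intro h
      rw [← key]
      exact h.mul v.isUnit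
    · intro h
      rw [← key] at h
      exact (Units.isUnit_mul_units _ v).mp h
end

section
/- Let J be a two-sided ideal in a unital associative algebra A and π : A → A/J the quotient map. If r : U → A is a maximal pseudo-resolvent, then the spectrum of the pseudo-resolvent π ∘ r in A/J is contained in the spectrum of r: σ(π(r)) ⊆ σ(r). -/
/-- Let `π : A → A/J` be the quotient map by a two-sided ideal of a unital
associative algebra (represented by a surjective algebra homomorphism `π : A → B`).  If
`r : U → A` is a maximal pseudo-resolvent, then the spectrum of the pseudo-resolvent
`π ∘ r` is contained in the spectrum `ℂ \ U` of `r`; here the spectrum of a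
pseudo-resolvent is the complement of the domain of its maximal extension, namely
`{z : ¬ IsUnit (1 + (z - α) • (π (r α)))}` for any `α ∈ U`. -/
theorem stmt18 {A B : Type*} [Ring A] [Algebra ℂ A] [Ring B] [Algebra ℂ B]
    (π : A →ₐ[ℂ] B) (hπ : Function.Surjective π)
    (U : Set ℂ) (r : ℂ → A)
    (hr : ∀ α ∈ U, ∀ γ ∈ U, r α - r γ = (γ - α) • (r α * r γ))
    -- maximality of the pseudo-resolvent `r`
    (hmax : ∀ α ∈ U, ∀ z : ℂ, IsUnit (1 + (z - α) • r α) → z ∈ U)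
    (α : ℂ) (hα : α ∈ U) :
    {z : ℂ | ¬ IsUnit (1 + (z - α) • π (r α))} ⊆ Uᶜ := by
  intro z hz
  simp only [Set.mem_compl_iff]
  intro hzU
  apply hz
  -- It suffices to show `1 + (z-α) • r α` is a unit in `A`.
  have hA : IsUnit (1 + (z - α) • r α) := by
    set c : ℂ := z - α with hc
    -- commutation of r α and r z
    have h1 : r α - r z = c • (r α * r z) := hr α hα z hzU
    have h2 : r z - r α = (-c) • (r z * r α) := by
      rw [hc, neg_sub]; exact hr z hzU α hα
    -- key product computation
    have key : ∀ x y : A, ∀ d : ℂ, x - y = d • (x * y) →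
        (1 + d • x) * (1 - d • y) = 1 := by
      intro x y d hxy
      calc (1 + d • x) * (1 - d • y)
          = 1 - d • y + d • x - (d * d) • (x * y) := by
            rw [mul_sub, add_mul, add_mul, one_mul, mul_one,
              smul_mul_smul_comm, one_mul]; abel
        _ = 1 + d • (x - y) - (d * d) • (x * y) := by rw [smul_sub]; abel
        _ = 1 := by rw [hxy, smul_smul]; abel
    have hxy1 : (1 + c • r α) * (1 - c • r z) = 1 := key _ _ _ h1
    have hxy2 : (1 + (-c) • r z) * (1 - (-c) • r α) = 1 := key _ _ _ h2
    have e1 : (1 : A) - c • r z = 1 + (-c) • r z := by rw [neg_smul]; abel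
    have e2 : (1 : A) - (-c) • r α = 1 + c • r α := by rw [neg_smul]; abel
    rw [e1] at hxy1
    rw [e2] at hxy2
    exact isUnit_iff_exists.mpr ⟨1 + (-c) • r z, hxy1, hxy2⟩
  have := hA.map π
  simpa [map_add, map_smul] using this
end
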